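/- arXiv:1902.10325 — 6 statements merged into one kernel-verified Lean document; each statement's English description precedes it below -/
import Mathlib

section
/- Let X be a Polish space, (Ξ, 𝒜, ℙ) a complete probability space with countable product (Ξ^∞, 𝒜^∞, ℙ^∞), M : Ξ ⇉ X a measurable set-valued map with closed values, g : X → ℝ ∪ {+∞} lower semicontinuous, and g_n : X → ℝ ∪ {+∞} a sequence of lower semicontinuous functions converging continuously to g. For ω = (ξ_k)_{k≥1} set S_n(ω) := ⋂_{k=1}^n M(ξ_k) and M_as := {x ∈ X : x ∈ M(ξ) for ℙ-a.e. ξ}. Assume the robust problem min{g(x) : x ∈ M_as} is feasible (there exists x ∈ M_as with g(x) < +∞) and that, for ℙ^∞-a.e. ω, the sequence g_n is eventually level-compact on S_n(ω). Then for ℙ^∞-a.e. ω ∈ Ξ^∞: ⋂_{ε>0} liminf_n (ε-argmin_{S_n(ω)} g_n) = argmin_{M_as} g = ⋂_{ε>0} limsup_n (ε-argmin_{S_n(ω)} g_n), where liminf_n and limsup_n denote the Painlevé–Kuratowski inner and outer limits of sets. -/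
open Filter Topology MeasureTheory Set

noncomputable section

/-- Epi-convergence of a sequence of extended-real-valued functions on a metric space:
for every `x`, (a) `liminf f n (u n) ≥ g x` along every sequence `u → x`, and
(b) `limsup f n (u n) ≤ g x` along some sequence `u → x`. -/
def EpiConv {X : Type*} [MetricSpace X] (f : ℕ → X → EReal) (g : X → EReal) : Prop :=
  ∀ x : X,
    (∀ u : ℕ → X, Tendsto u atTop (𝓝 x) → g x ≤ atTop.liminf fun n => f n (u n)) ∧
    (∃ u : ℕ → X, Tendsto u atTop (𝓝 x) ∧ (atTop.limsup fun n => f n (u n)) ≤ g x)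

/-- Continuous convergence: `f n (u n) → g x` for every `x` and every sequence `u → x`. -/
def ContConv {X : Type*} [MetricSpace X] (f : ℕ → X → EReal) (g : X → EReal) : Prop :=
  ∀ x : X, ∀ u : ℕ → X, Tendsto u atTop (𝓝 x) →
    Tendsto (fun n => f n (u n)) atTop (𝓝 (g x))

/-- Infimal value of `h` on `C`. -/
def vOn {X : Type*} (h : X → EReal) (C : Set X) : EReal := ⨅ x ∈ C, h x

open Classical in
/-- ε-infimal value of `h` on `C`: `inf_C h + ε` if `inf_C h > -∞`, and `-1/ε` otherwise
(with the convention `1/0 = +∞`, so `-1/0 = -∞`). -/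
def vEpsOn {X : Type*} (h : X → EReal) (C : Set X) (ε : ℝ) : EReal :=
  if vOn h C = ⊥ then (if ε = 0 then ⊥ else ((-ε⁻¹ : ℝ) : EReal))
  else vOn h C + (ε : EReal)

/-- ε-argmin of `h` on `C`: the points of `C` where `h` is below the ε-infimal value. -/
def argminOn {X : Type*} (h : X → EReal) (C : Set X) (ε : ℝ) : Set X :=
  {x ∈ C | h x ≤ vEpsOn h C ε}

/-- Painlevé–Kuratowski outer limit: points whose distance to `S n` has liminf 0. -/
def outerLim {X : Type*} [MetricSpace X] (S : ℕ → Set X) : Set X :=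
  {x | atTop.liminf (fun n => EMetric.infEdist x (S n)) = 0}

/-- Painlevé–Kuratowski inner limit: points whose distance to `S n` has limsup 0. -/
def innerLim {X : Type*} [MetricSpace X] (S : ℕ → Set X) : Set X :=
  {x | atTop.limsup (fun n => EMetric.infEdist x (S n)) = 0}

open Classical in
/-- Indicator function `δ_A`: `0` on `A`, `+∞` off `A`. -/
def delta {X : Type*} (A : Set X) : X → EReal := fun x => if x ∈ A then 0 else ⊤

/-- The sequence `g n` is eventually level-compact on the sets `C n`: for every level `α`
there is `N` such that the union over `n ≥ N` of the `α`-sublevel sets of `g n` on `C n`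
is relatively compact. -/
def EvLevelCompact {X : Type*} [MetricSpace X] (g : ℕ → X → EReal) (C : ℕ → Set X) : Prop :=
  ∀ α : ℝ, ∃ N : ℕ, IsCompact (closure (⋃ n ∈ Ici N, {x ∈ C n | g n x ≤ (α : EReal)}))

/-- Measurability of a set-valued map: preimages of open sets are measurable. -/
def MeasurableMultifun {Ξ X : Type*} [MeasurableSpace Ξ] [TopologicalSpace X]
    (M : Ξ → Set X) : Prop :=
  ∀ U : Set X, IsOpen U → MeasurableSet {ξ | (M ξ ∩ U).Nonempty}

/-- `P` is the countable product `ℙ^∞` of the probability measure `ℙ`: every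
finite-dimensional cylinder has product measure. -/
def IsProductMeasure {Ξ : Type*} [MeasurableSpace Ξ] (P : Measure (ℕ → Ξ))
    (ℙ : Measure Ξ) : Prop :=
  ∀ (s : Finset ℕ) (A : ℕ → Set Ξ), (∀ i, MeasurableSet (A i)) →
    P {ω | ∀ i ∈ s, ω i ∈ A i} = ∏ i ∈ s, ℙ (A i)

/-- Moreau envelope `e_λ g`. -/
def moreau {d : ℕ} (g : EuclideanSpace ℝ (Fin d) → EReal) (lam : ℝ)
    (x : EuclideanSpace ℝ (Fin d)) : EReal :=
  ⨅ u, g u + ((‖x - u‖ ^ 2 / (2 * lam) : ℝ) : EReal)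

lemma contConv_subseq {X : Type*} [MetricSpace X] {gn : ℕ → X → EReal} {g : X → EReal}
    (hcc : ContConv gn g) {φ : ℕ → ℕ} (hφ : StrictMono φ) {y : ℕ → X} {x : X}
    (hy : Tendsto y atTop (𝓝 x)) :
    Tendsto (fun j => gn (φ j) (y j)) atTop (𝓝 (g x)) := by
  classical
  set J : ℕ → ℕ := fun n => Nat.findGreatest (fun j => φ j ≤ n) n with hJdef
  have hle : ∀ j n, φ j ≤ n → j ≤ J n := by
    intro j n h
    exact Nat.le_findGreatest ((hφ.le_apply).trans h) h
  have hJφ : ∀ j, J (φ j) = j := by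
    intro j
    refine le_antisymm ?_ (hle j (φ j) le_rfl)
    rcases Nat.eq_zero_or_pos (J (φ j)) with h0 | hpos
    · omega
    · have hspec : φ (J (φ j)) ≤ φ j :=
        Nat.findGreatest_spec (P := fun j' => φ j' ≤ φ j) (hφ.le_apply) le_rfl
      exact hφ.le_iff_le.mp hspec
  have hJtop : Tendsto J atTop atTop :=
    tendsto_atTop_atTop.2 fun j => ⟨φ j, fun n hn => hle j n hn⟩
  have hu : Tendsto (fun n => y (J n)) atTop (𝓝 x) := hy.comp hJtop
  have h2 := (hcc x (fun n => y (J n)) hu).comp hφ.tendsto_atTop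
  have heq : ((fun n => gn n (y (J n))) ∘ φ) = fun j => gn (φ j) (y j) := by
    funext j; simp only [Function.comp_apply, hJφ]
  rwa [heq] at h2

lemma vOn_le {X : Type*} {h : X → EReal} {C : Set X} {x : X} (hx : x ∈ C) : vOn h C ≤ h x :=
  iInf₂_le x hx

lemma exists_lt_of_vOn_lt {X : Type*} {h : X → EReal} {C : Set X} {a : EReal}
    (hv : vOn h C < a) : ∃ x ∈ C, h x < a := by
  by_contra hcon
  push_neg at hcon
  exact absurd (le_iInf₂ hcon) (not_le.2 hv)

lemma mem_innerLim_of_eventually {X : Type*} [MetricSpace X] {S : ℕ → Set X} {x : X}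
    (h : ∀ᶠ n in atTop, x ∈ S n) : x ∈ innerLim S := by
  have : ∀ᶠ n in atTop, EMetric.infEdist x (S n) = 0 :=
    h.mono fun n hn => EMetric.infEdist_zero_of_mem hn
  have hcong : atTop.limsup (fun n => EMetric.infEdist x (S n)) = atTop.limsup (fun _ : ℕ => (0 : ENNReal)) :=
    limsup_congr this
  simp only [innerLim, mem_setOf_eq, hcong, limsup_const]

lemma innerLim_subset_outerLim {X : Type*} [MetricSpace X] (S : ℕ → Set X) :
    innerLim S ⊆ outerLim S := by
  intro x hx
  have h1 : atTop.liminf (fun n => EMetric.infEdist x (S n)) ≤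
      atTop.limsup (fun n => EMetric.infEdist x (S n)) := liminf_le_limsup
  simp only [innerLim, mem_setOf_eq] at hx
  simp only [outerLim, mem_setOf_eq]
  exact le_antisymm (hx ▸ h1) zero_le

lemma outerLim_extract {X : Type*} [MetricSpace X] {S : ℕ → Set X} {x : X}
    (hx : x ∈ outerLim S) :
    ∃ φ : ℕ → ℕ, StrictMono φ ∧ ∃ y : ℕ → X, (∀ j, y j ∈ S (φ j)) ∧
      Tendsto y atTop (𝓝 x) := by
  simp only [outerLim, mem_setOf_eq] at hx
  have hfreq : ∀ j : ℕ, ∃ᶠ n in atTop, ∃ y ∈ S n, edist x y < (1 : ENNReal) / (j + 1) := by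
    intro j
    have hpos : (0 : ENNReal) < 1 / (j + 1) := by
      apply ENNReal.div_pos one_ne_zero
      simp [ENNReal.add_eq_top]
    have := frequently_lt_of_liminf_lt (by isBoundedDefault) (hx ▸ hpos)
    exact this.mono fun n hn => EMetric.infEdist_lt_iff.1 hn
  obtain ⟨φ, hφ, hP⟩ := extraction_forall_of_frequently hfreq
  choose y hy hd using hP
  refine ⟨φ, hφ, y, hy, ?_⟩
  rw [tendsto_iff_edist_tendsto_0]
  have hb : Tendsto (fun j : ℕ => (1 : ENNReal) / (j + 1)) atTop (𝓝 0) := by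
    simp only [one_div]
    have h0 := ENNReal.tendsto_inv_nat_nhds_zero.comp (tendsto_add_atTop_nat 1)
    refine h0.congr fun j => ?_
    simp [Function.comp]
  refine tendsto_of_tendsto_of_tendsto_of_le_of_le tendsto_const_nhds hb
    (fun j => zero_le) (fun j => ?_)
  rw [edist_comm]; exact (hd j).le

lemma det_scenario {X : Type*} [MetricSpace X] (C : ℕ → Set X) (hCc : ∀ n, IsClosed (C n))
    (hmono : ∀ ⦃m n : ℕ⦄, m ≤ n → C n ⊆ C m)
    (D : Set X) (hDeq : D = ⋂ n, C n)
    (g : X → EReal) (gn : ℕ → X → EReal)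
    (hg_noBot : ∀ x, g x ≠ ⊥)
    (hcc : ContConv gn g)
    (hfeas : ∃ x ∈ D, g x < ⊤)
    (hlc : EvLevelCompact gn C) :
    (⋂ ε ∈ Ioi (0:ℝ), innerLim fun n => argminOn (gn n) (C n) ε) = argminOn g D 0 ∧
    argminOn g D 0 = ⋂ ε ∈ Ioi (0:ℝ), outerLim fun n => argminOn (gn n) (C n) ε := by
  have hDC : ∀ n, D ⊆ C n := fun n => hDeq ▸ iInter_subset C n
  have key : ∀ (φ : ℕ → ℕ), StrictMono φ → ∀ (y : ℕ → X) (x : X),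
      (∀ j, y j ∈ C (φ j)) → Tendsto y atTop (𝓝 x) →
      x ∈ D ∧ Tendsto (fun j => gn (φ j) (y j)) atTop (𝓝 (g x)) := by
    intro φ hφ y x hyC hy
    refine ⟨?_, contConv_subseq hcc hφ hy⟩
    rw [hDeq, mem_iInter]
    intro m
    refine (hCc m).mem_of_tendsto hy ?_
    filter_upwards [eventually_ge_atTop m] with j hj
    exact hmono (hj.trans hφ.le_apply) (hyC j)
  have hlimsup : atTop.limsup (fun n => vOn (gn n) (C n)) ≤ vOn g D := by
    rw [vOn]
    refine le_iInf₂ fun x hx => ?_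
    have hx' := hcc x (fun _ => x) tendsto_const_nhds
    calc atTop.limsup (fun n => vOn (gn n) (C n)) ≤ atTop.limsup (fun n => gn n x) :=
          limsup_le_limsup (Eventually.of_forall fun n => vOn_le (hDC n hx))
      _ = g x := hx'.limsup_eq
  obtain ⟨x₀, hx₀D, hx₀⟩ := hfeas
  have hvtop : vOn g D ≠ ⊤ := ((vOn_le hx₀D).trans_lt hx₀).ne
  have hInnOut : (⋂ ε ∈ Ioi (0:ℝ), innerLim fun n => argminOn (gn n) (C n) ε) ⊆
      ⋂ ε ∈ Ioi (0:ℝ), outerLim fun n => argminOn (gn n) (C n) ε :=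
    iInter₂_mono fun ε _ => innerLim_subset_outerLim _
  by_cases hvb : vOn g D = ⊥
  · -- degenerate case : value is -∞
    have hargmin_empty : argminOn g D 0 = ∅ := by
      ext x
      simp only [argminOn, mem_setOf_eq, mem_empty_iff_false, iff_false, not_and]
      intro hxD
      rw [vEpsOn, if_pos hvb, if_pos rfl]
      intro hxle
      exact hg_noBot x (le_bot_iff.1 hxle)
    have hvtend : Tendsto (fun n => vOn (gn n) (C n)) atTop (𝓝 ⊥) :=
      tendsto_of_le_liminf_of_limsup_le bot_le (hvb ▸ hlimsup)
    have hOutArg : (⋂ ε ∈ Ioi (0:ℝ), outerLim fun n => argminOn (gn n) (C n) ε) ⊆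
        argminOn g D 0 := by
      intro x hx
      exfalso
      have hxle : ∀ ε : ℝ, 0 < ε → g x ≤ ((-ε⁻¹ : ℝ) : EReal) := by
        intro ε hε
        have hxε : x ∈ outerLim fun n => argminOn (gn n) (C n) ε :=
          mem_iInter₂.1 hx ε hε
        obtain ⟨φ, hφ, y, hyA, hytend⟩ := outerLim_extract hxε
        obtain ⟨hxD, hgtend⟩ := key φ hφ y x (fun j => (hyA j).1) hytend
        have hev : ∀ᶠ n in atTop, vEpsOn (gn n) (C n) ε ≤ ((-ε⁻¹ : ℝ) : EReal) := by
          have hev1 : ∀ᶠ n in atTop, vOn (gn n) (C n) < ((-ε⁻¹ - ε : ℝ) : EReal) :=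
            hvtend.eventually_lt_const (EReal.bot_lt_coe _)
          filter_upwards [hev1] with n hn
          rw [vEpsOn]
          split_ifs with h1 h2
          · exact bot_le
          · exact le_rfl
          · calc vOn (gn n) (C n) + (ε : EReal)
                ≤ ((-ε⁻¹ - ε : ℝ) : EReal) + (ε : EReal) := add_le_add hn.le le_rfl
              _ = ((-ε⁻¹ : ℝ) : EReal) := by rw [← EReal.coe_add]; norm_num
        refine le_of_tendsto hgtend ?_
        filter_upwards [hφ.tendsto_atTop.eventually hev] with j hj
        exact le_trans (hyA j).2 hj
      have hbot : g x = ⊥ := by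
        by_contra hgb
        obtain ⟨c, hc1, hc2⟩ := EReal.exists_between_coe_real (Ne.bot_lt hgb)
        set t : ℝ := min c (-1) with ht
        have htneg : t < 0 := lt_of_le_of_lt (min_le_right _ _) (by norm_num)
        have hεpos : (0:ℝ) < -t⁻¹ := by
          have : t⁻¹ < 0 := inv_neg''.mpr htneg
          linarith
        have := hxle (-t⁻¹) hεpos
        have hinv : (-(-t⁻¹)⁻¹ : ℝ) = t := by
          rw [inv_neg, inv_inv, neg_neg]
        rw [hinv] at this
        have htc : t ≤ c := min_le_left _ _
        have : g x ≤ (c : EReal) := this.trans (EReal.coe_le_coe_iff.2 htc)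
        exact absurd hc2 (not_lt.2 this)
      exact hg_noBot x hbot
    constructor
    · rw [hargmin_empty]
      refine subset_antisymm ?_ (empty_subset _)
      rw [← hargmin_empty]
      exact hInnOut.trans hOutArg
    · rw [hargmin_empty]
      refine subset_antisymm (empty_subset _) ?_
      rw [← hargmin_empty]
      exact hOutArg
  · -- main case : value is a real number
    obtain ⟨r, hr⟩ : ∃ r : ℝ, vOn g D = (r : EReal) := by
      lift vOn g D to ℝ using ⟨hvtop, hvb⟩ with r hr
      exact ⟨r, rfl⟩
    have hliminf : vOn g D ≤ atTop.liminf fun n => vOn (gn n) (C n) := by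
      by_contra h
      push_neg at h
      obtain ⟨c, hc1, hc2⟩ := EReal.exists_between_coe_real h
      have hfreq : ∃ᶠ n in atTop, vOn (gn n) (C n) < (c : EReal) :=
        frequently_lt_of_liminf_lt (by isBoundedDefault) hc1
      obtain ⟨N, hK⟩ := hlc c
      have hfreq2 : ∃ᶠ n in atTop, (N ≤ n ∧ ∃ x ∈ C n, gn n x < (c : EReal)) :=
        (hfreq.and_eventually (eventually_ge_atTop N)).mono
          fun n hn => ⟨hn.2, exists_lt_of_vOn_lt hn.1⟩
      obtain ⟨φ, hφ, hP⟩ := extraction_of_frequently_atTop hfreq2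
      have hP1 : ∀ j, N ≤ φ j := fun j => (hP j).1
      choose y hyC hylt using fun j => (hP j).2
      have hyK : ∀ j, y j ∈ closure (⋃ n ∈ Ici N, {x ∈ C n | gn n x ≤ (c : EReal)}) :=
        fun j => subset_closure (mem_iUnion₂.2 ⟨φ j, hP1 j, hyC j, (hylt j).le⟩)
      obtain ⟨xb, _, ψ, hψ, hconv⟩ := hK.tendsto_subseq hyK
      obtain ⟨hxbD, hgtend⟩ := key (φ ∘ ψ) (hφ.comp hψ) (fun j => y (ψ j)) xb
        (fun j => hyC (ψ j)) hconv
      have hgxb : g xb ≤ (c : EReal) :=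
        le_of_tendsto hgtend (Eventually.of_forall fun j => (hylt (ψ j)).le)
      exact absurd ((vOn_le hxbD).trans hgxb) (not_le.2 hc2)
    have hvtend : Tendsto (fun n => vOn (gn n) (C n)) atTop (𝓝 (vOn g D)) :=
      tendsto_of_le_liminf_of_limsup_le hliminf hlimsup
    have hvnb : ∀ᶠ n in atTop, vOn (gn n) (C n) ≠ ⊥ :=
      (hvtend.eventually_const_lt (Ne.bot_lt hvb)).mono fun n hn => hn.ne'
    have hvEps : ∀ ε : ℝ, 0 < ε →
        Tendsto (fun n => vEpsOn (gn n) (C n) ε) atTop (𝓝 (vOn g D + (ε : EReal))) := by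
      intro ε hε
      have hca : ContinuousAt (fun p : EReal × EReal => p.1 + p.2) (vOn g D, (ε : EReal)) :=
        EReal.continuousAt_add (Or.inr (by simp)) (Or.inr (by simp))
      have hadd : Tendsto (fun n => vOn (gn n) (C n) + (ε : EReal)) atTop
          (𝓝 (vOn g D + (ε : EReal))) :=
        hca.tendsto.comp (hvtend.prodMk_nhds tendsto_const_nhds)
      refine Tendsto.congr' ?_ hadd
      filter_upwards [hvnb] with n hn
      rw [vEpsOn, if_neg hn]
    have hOutArg : (⋂ ε ∈ Ioi (0:ℝ), outerLim fun n => argminOn (gn n) (C n) ε) ⊆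
        argminOn g D 0 := by
      intro x hx
      have hstep : ∀ ε : ℝ, 0 < ε → x ∈ D ∧ g x ≤ vOn g D + (ε : EReal) := by
        intro ε hε
        obtain ⟨φ, hφ, y, hyA, hytend⟩ := outerLim_extract (mem_iInter₂.1 hx ε hε)
        obtain ⟨hxD, hgtend⟩ := key φ hφ y x (fun j => (hyA j).1) hytend
        have hvEφ : Tendsto (fun j => vEpsOn (gn (φ j)) (C (φ j)) ε) atTop
            (𝓝 (vOn g D + (ε : EReal))) := (hvEps ε hε).comp hφ.tendsto_atTop
        exact ⟨hxD, le_of_tendsto_of_tendsto' hgtend hvEφ fun j => (hyA j).2⟩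
      have hxD := (hstep 1 one_pos).1
      have hgle : g x ≤ vOn g D := by
        by_contra h
        push_neg at h
        obtain ⟨c, hc1, hc2⟩ := EReal.exists_between_coe_real h
        have hrc : r < c := by
          rw [hr] at hc1; exact_mod_cast hc1
        have h2 := (hstep (c - r) (by linarith)).2
        rw [hr, ← EReal.coe_add] at h2
        have : g x ≤ (c : EReal) := by
          convert h2 using 2
          ring
        exact absurd hc2 (not_lt.2 this)
      refine ⟨hxD, ?_⟩
      rw [vEpsOn, if_neg hvb]
      simpa using hgle
    have hArgInn : argminOn g D 0 ⊆
        ⋂ ε ∈ Ioi (0:ℝ), innerLim fun n => argminOn (gn n) (C n) ε := by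
      rintro x ⟨hxD, hxle⟩
      have hgv : g x ≤ vOn g D := by
        rw [vEpsOn, if_neg hvb] at hxle
        simpa using hxle
      refine mem_iInter₂.2 fun ε hε => ?_
      apply mem_innerLim_of_eventually
      have htendg : Tendsto (fun n => gn n x) atTop (𝓝 (g x)) :=
        hcc x (fun _ => x) tendsto_const_nhds
      have hlt : g x < vOn g D + (ε : EReal) := by
        refine hgv.trans_lt ?_
        rw [hr, ← EReal.coe_add]
        exact_mod_cast lt_add_of_pos_right r hε
      have hev := htendg.eventually_lt (hvEps ε hε) hlt
      filter_upwards [hev] with n hn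
      exact ⟨hDC n hxD, hn.le⟩
    exact ⟨subset_antisymm (hInnOut.trans hOutArg) hArgInn,
      subset_antisymm (hArgInn.trans hInnOut) hOutArg⟩

lemma meas_mem {Ξ X : Type*} [MeasurableSpace Ξ] [MetricSpace X] {M : Ξ → Set X}
    (hM_closed : ∀ ξ, IsClosed (M ξ)) (hM_meas : MeasurableMultifun M) (x : X) :
    MeasurableSet {ζ | x ∈ M ζ} := by
  have heq : {ζ | x ∈ M ζ} =
      ⋂ m : ℕ, {ζ | (M ζ ∩ Metric.ball x (1 / (m + 1))).Nonempty} := by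
    ext ζ
    simp only [mem_setOf_eq, mem_iInter]
    constructor
    · intro h m
      exact ⟨x, h, Metric.mem_ball_self (by positivity)⟩
    · intro h
      by_contra hx
      obtain ⟨r, hr, hball⟩ := Metric.isOpen_iff.1 (hM_closed ζ).isOpen_compl x hx
      obtain ⟨m, hm⟩ := exists_nat_one_div_lt hr
      obtain ⟨y, hyM, hyb⟩ := h m
      exact hball (Metric.mem_ball.2 ((Metric.mem_ball.1 hyb).trans hm)) hyM
  rw [heq]
  exact MeasurableSet.iInter fun m => hM_meas _ Metric.isOpen_ball

lemma prod_ae_all {Ξ : Type*} [MeasurableSpace Ξ] (ℙ : Measure Ξ) [IsProbabilityMeasure ℙ]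
    (P : Measure (ℕ → Ξ)) [IsProbabilityMeasure P] (hP : IsProductMeasure P ℙ)
    {B : Set Ξ} (hB : MeasurableSet B) (h1 : ℙ B = 1) :
    ∀ᵐ ω ∂P, ∀ k, ω k ∈ B := by
  have hae : ∀ m : ℕ, ∀ᵐ ω ∂P, ∀ k ∈ Finset.range m, ω k ∈ B := by
    intro m
    have hmeas : MeasurableSet {ω : ℕ → Ξ | ∀ k ∈ Finset.range m, ω k ∈ B} := by
      have heq : {ω : ℕ → Ξ | ∀ k ∈ Finset.range m, ω k ∈ B} =
          ⋂ k ∈ Finset.range m, (fun ω : ℕ → Ξ => ω k) ⁻¹' B := by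
        ext; simp
      rw [heq]
      exact MeasurableSet.biInter (Finset.range m).countable_toSet
        fun k _ => (measurable_pi_apply k) hB
    have hm : P {ω | ∀ k ∈ Finset.range m, ω k ∈ B} = 1 := by
      rw [hP (Finset.range m) (fun _ => B) (fun _ => hB)]
      simp [h1]
    rw [← prob_compl_eq_zero_iff hmeas] at hm
    rw [ae_iff]
    exact hm
  have hall := ae_all_iff.2 hae
  filter_upwards [hall] with ω hω k
  exact hω (k + 1) k (Finset.mem_range.2 (lt_add_one k))

lemma prod_ae_hit {Ξ : Type*} [MeasurableSpace Ξ] (ℙ : Measure Ξ) [IsProbabilityMeasure ℙ]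
    (P : Measure (ℕ → Ξ)) [IsProbabilityMeasure P] (hP : IsProductMeasure P ℙ)
    {A : Set Ξ} (hA : MeasurableSet A) (h0 : ℙ A ≠ 0) :
    ∀ᵐ ω ∂P, ∃ k, ω k ∈ A := by
  rw [ae_iff]
  have hq : ℙ Aᶜ < 1 := by
    rw [measure_compl hA (measure_ne_top ℙ A), measure_univ]
    exact ENNReal.sub_lt_self ENNReal.one_ne_top one_ne_zero h0
  have hbound : ∀ m : ℕ, P {ω : ℕ → Ξ | ¬∃ k, ω k ∈ A} ≤ (ℙ Aᶜ) ^ m := by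
    intro m
    calc P {ω : ℕ → Ξ | ¬∃ k, ω k ∈ A}
        ≤ P {ω | ∀ k ∈ Finset.range m, ω k ∈ Aᶜ} := by
          refine measure_mono fun ω hω k _ => ?_
          exact fun h => hω ⟨k, h⟩
      _ = ∏ _i ∈ Finset.range m, ℙ Aᶜ := hP _ (fun _ => Aᶜ) (fun _ => hA.compl)
      _ = (ℙ Aᶜ) ^ m := by rw [Finset.prod_const, Finset.card_range]
  have htend := ENNReal.tendsto_pow_atTop_nhds_zero_of_lt_one hq
  exact le_zero_iff.1 (ge_of_tendsto' htend hbound)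

/-- scenario approach. Under feasibility and eventual level-compactness,
for `P`-a.e. `ω`:
`⋂_{ε>0} liminf_n (ε-argmin_{S n ω} g n) = argmin_{M_as} g = ⋂_{ε>0} limsup_n (ε-argmin_{S n ω} g n)`. -/
theorem scenario_argmin_characterization {X : Type*} [MetricSpace X] [PolishSpace X]
    {Ξ : Type*} [MeasurableSpace Ξ] (ℙ : Measure Ξ) [IsProbabilityMeasure ℙ] [ℙ.IsComplete]
    (P : Measure (ℕ → Ξ)) [IsProbabilityMeasure P] (hP : IsProductMeasure P ℙ)
    (M : Ξ → Set X) (hM_closed : ∀ ξ, IsClosed (M ξ)) (hM_meas : MeasurableMultifun M)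
    (g : X → EReal) (gn : ℕ → X → EReal)
    (hg_noBot : ∀ x, g x ≠ ⊥) (hgn_noBot : ∀ n x, gn n x ≠ ⊥)
    (hg_lsc : LowerSemicontinuous g) (hgn_lsc : ∀ n, LowerSemicontinuous (gn n))
    (hcc : ContConv gn g)
    (hfeas : ∃ x ∈ {y : X | ∀ᵐ ζ ∂ℙ, y ∈ M ζ}, g x < ⊤)
    (hlc : ∀ᵐ ω ∂P, EvLevelCompact gn (fun n => ⋂ k ∈ Finset.range n, M (ω k))) :
    ∀ᵐ ω ∂P,
      (⋂ ε ∈ Ioi (0 : ℝ), innerLim (fun n =>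
          argminOn (gn n) (⋂ k ∈ Finset.range n, M (ω k)) ε)) =
        argminOn g {y : X | ∀ᵐ ζ ∂ℙ, y ∈ M ζ} 0 ∧
      argminOn g {y : X | ∀ᵐ ζ ∂ℙ, y ∈ M ζ} 0 =
        ⋂ ε ∈ Ioi (0 : ℝ), outerLim (fun n =>
          argminOn (gn n) (⋂ k ∈ Finset.range n, M (ω k)) ε) := by
  classical
  -- countable dense subset of the a.s. feasible set
  have hsep : TopologicalSpace.IsSeparable {y : X | ∀ᵐ ζ ∂ℙ, y ∈ M ζ} :=
    TopologicalSpace.IsSeparable.of_separableSpace _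
  obtain ⟨c, hcMas, hccount, hcdense⟩ := hsep.exists_countable_dense_subset
  have hE1set : ∀ᵐ ζ ∂ℙ, ∀ d ∈ c, d ∈ M ζ :=
    (ae_ball_iff hccount).2 fun d hd => hcMas hd
  have hEmeas : MeasurableSet {ζ | ∀ d ∈ c, d ∈ M ζ} := by
    have heq : {ζ | ∀ d ∈ c, d ∈ M ζ} = ⋂ d ∈ c, {ζ | d ∈ M ζ} := by
      ext; simp
    rw [heq]
    exact MeasurableSet.biInter hccount fun d _ => meas_mem hM_closed hM_meas d
  have hE1 : ℙ {ζ | ∀ d ∈ c, d ∈ M ζ} = 1 := by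
    rw [← prob_compl_eq_zero_iff hEmeas]
    exact ae_iff.1 hE1set
  have hAE1 : ∀ᵐ ω ∂P, ∀ k, ω k ∈ {ζ | ∀ d ∈ c, d ∈ M ζ} :=
    prod_ae_all ℙ P hP hEmeas hE1
  -- for every basis element charged by the "miss" event, some sample hits it
  have hbc : (TopologicalSpace.countableBasis X).Countable :=
    TopologicalSpace.countable_countableBasis X
  have hhits : ∀ᵐ ω ∂P, ∀ U ∈ TopologicalSpace.countableBasis X,
      ℙ {ζ | ¬(M ζ ∩ U).Nonempty} ≠ 0 → ∃ k, ω k ∈ {ζ | ¬(M ζ ∩ U).Nonempty} := by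
    rw [ae_ball_iff hbc]
    intro U hU
    by_cases h0 : ℙ {ζ | ¬(M ζ ∩ U).Nonempty} = 0
    · filter_upwards with ω h
      exact absurd h0 h
    · have hA : MeasurableSet {ζ | ¬(M ζ ∩ U).Nonempty} := by
        have : {ζ | ¬(M ζ ∩ U).Nonempty} = {ζ | (M ζ ∩ U).Nonempty}ᶜ := rfl
        rw [this]
        exact (hM_meas U (TopologicalSpace.isOpen_of_mem_countableBasis hU)).compl
      filter_upwards [prod_ae_hit ℙ P hP hA h0] with ω hω _
      exact hω
  filter_upwards [hAE1, hhits, hlc] with ω hω1 hω2 hω3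
  -- almost surely the sampled sets shrink exactly to the a.s. feasible set
  have hMsub : ∀ k, {y : X | ∀ᵐ ζ ∂ℙ, y ∈ M ζ} ⊆ M (ω k) := by
    intro k x hx
    have hsubc : c ⊆ M (ω k) := fun d hd => hω1 k d hd
    exact closure_minimal hsubc (hM_closed (ω k)) (hcdense hx)
  have hMsup : (⋂ k, M (ω k)) ⊆ {y : X | ∀ᵐ ζ ∂ℙ, y ∈ M ζ} := by
    intro x hx
    rw [mem_setOf_eq, ae_iff]
    have hdecomp : {ζ | ¬x ∈ M ζ} ⊆
        ⋃ m : ℕ, {ζ | ¬(M ζ ∩ Metric.ball x (1 / (m + 1))).Nonempty} := by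
      intro ζ hζ
      obtain ⟨r, hr, hball⟩ := Metric.isOpen_iff.1 (hM_closed ζ).isOpen_compl x hζ
      obtain ⟨m, hm⟩ := exists_nat_one_div_lt hr
      refine mem_iUnion.2 ⟨m, ?_⟩
      rintro ⟨y, hyM, hyb⟩
      exact hball (Metric.mem_ball.2 ((Metric.mem_ball.1 hyb).trans hm)) hyM
    refine measure_mono_null hdecomp (measure_iUnion_null fun m => ?_)
    by_contra h0
    have hmpos : (0:ℝ) < 1 / (m + 1) := by positivity
    obtain ⟨U, hUb, hxU, hUsub⟩ :=
      (TopologicalSpace.isBasis_countableBasis X).exists_subset_of_mem_open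
        (Metric.mem_ball_self hmpos) Metric.isOpen_ball
    have hUA : {ζ | ¬(M ζ ∩ Metric.ball x (1 / (m + 1))).Nonempty} ⊆
        {ζ | ¬(M ζ ∩ U).Nonempty} := by
      rintro ζ hζ ⟨y, hy1, hy2⟩
      exact hζ ⟨y, hy1, hUsub hy2⟩
    have h0' : ℙ {ζ | ¬(M ζ ∩ U).Nonempty} ≠ 0 :=
      fun hz => h0 (measure_mono_null hUA hz)
    obtain ⟨k, hk⟩ := hω2 U hUb h0'
    exact hk ⟨x, mem_iInter.1 hx k, hxU⟩
  have hDeq : {y : X | ∀ᵐ ζ ∂ℙ, y ∈ M ζ} = ⋂ n, ⋂ k ∈ Finset.range n, M (ω k) := by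
    apply subset_antisymm
    · intro x hx
      refine mem_iInter.2 fun n => mem_iInter₂.2 fun k _ => hMsub k hx
    · intro x hx
      refine hMsup (mem_iInter.2 fun k => ?_)
      exact mem_iInter₂.1 (mem_iInter.1 hx (k + 1)) k (Finset.mem_range.2 (lt_add_one k))
  have hCc : ∀ n, IsClosed (⋂ k ∈ Finset.range n, M (ω k)) :=
    fun n => isClosed_biInter fun k _ => hM_closed _
  have hmono : ∀ ⦃m n : ℕ⦄, m ≤ n →
      (⋂ k ∈ Finset.range n, M (ω k)) ⊆ ⋂ k ∈ Finset.range m, M (ω k) := by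
    intro m n hmn x hx
    refine mem_iInter₂.2 fun k hk => ?_
    exact mem_iInter₂.1 hx k (Finset.mem_range.2 ((Finset.mem_range.1 hk).trans_le hmn))
  exact det_scenario (fun n => ⋂ k ∈ Finset.range n, M (ω k)) hCc hmono
    {y : X | ∀ᵐ ζ ∂ℙ, y ∈ M ζ} hDeq g gn hg_noBot hcc hfeas hω3
end
end

section
/- Let g : ℝ^d → ℝ ∪ {+∞} be proper, lower semicontinuous and prox-bounded with threshold λ_g > 0, let (Ξ, 𝒜, ℙ) be a complete probability space with countable product (Ξ^∞, 𝒜^∞, ℙ^∞), let φ : Ξ × ℝ^d → ℝ ∪ {±∞} be a normal integrand, and let C ⊆ ℝ^d be a bounded closed set. Consider the robust problem: minimize g(x) subject to x ∈ C and φ(ξ, x) ≤ 0 for ℙ-a.e. ξ, and assume it is feasible (there exists x ∈ C with g(x) < +∞ and φ(ξ, x) ≤ 0 for ℙ-a.e. ξ). Let λ_n ∈ (0, λ_g) with λ_n ↓ 0, and for ω = (ξ_k)_{k≥1} ∈ Ξ^∞ let x_n(ω) be a measurable selection of minimizers of the problem: minimize e_{λ_n}g(x) subject to x ∈ C and φ(ξ_i,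 x) ≤ 0 for i = 1, …, n. Then for ℙ^∞-a.e. ω ∈ Ξ^∞: (a) e_{λ_n}g(x_n(ω)) converges to the optimal value of the robust problem, and (b) every cluster point of the sequence (x_n(ω))_{n∈ℕ} is a minimizer of the robust problem. -/
open Filter Topology MeasureTheory Set

noncomputable section

section AuxCapacitability
open scoped ENNReal

namespace MeasureTheory

section Capacitability

variable {X : Type*} [TopologicalSpace X] [TopologicalSpace.PseudoMetrizableSpace X]
  [T2Space X] [MeasurableSpace X] [BorelSpace X] (μ : Measure X) [IsFiniteMeasure μ]

theorem AnalyticSet.exists_isCompact_le {A : Set X} (hA : AnalyticSet A) {r : ℝ≥0∞}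
    (hr : r < μ A) : ∃ K, K ⊆ A ∧ IsCompact K ∧ r ≤ μ K := by
  classical
  rw [AnalyticSet] at hA
  rcases hA with rfl | ⟨f, fcont, rfl⟩
  · simp at hr
  -- recursive construction of the bounds N
  set c : (ℕ → ℕ) → ℕ → ℕ := fun g n =>
    if h : ∃ m, r < μ (f '' {x | (∀ i, i < n → x i ≤ g i) ∧ x n ≤ m}) then h.choose else 0
    with hc
  set B : ℕ → (ℕ → ℕ) := fun n =>
    Nat.rec (fun _ => 0) (fun n Bn => Function.update Bn n (c Bn n)) n with hB
  set N : ℕ → ℕ := fun n => B (n + 1) n with hN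
  have hBstab : ∀ n k, n ≤ k → ∀ i, i < n → B k i = B n i := by
    intro n k hk
    induction k with
    | zero => intro i hi; omega
    | succ k ih =>
      intro i hi
      rcases Nat.lt_or_ge n (k+1) with h | h
      · have : B (k+1) i = B k i := by
          show Function.update (B k) k (c (B k) k) i = B k i
          exact Function.update_of_ne (by omega) _ _
        rw [this, ih (by omega) i hi]
      · have : n = k + 1 := le_antisymm hk h
        rw [this]
  have hBN : ∀ n i, i < n → B n i = N i := by
    intro n i hi
    rw [hN]
    exact (hBstab (i+1) n (by omega) i (by omega)).symm ▸ rfl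
  set Sig : ℕ → Set (ℕ → ℕ) := fun n => {x | ∀ i, i < n → x i ≤ N i} with hSig
  have key : ∀ n, r < μ (f '' Sig n) := by
    intro n
    induction n with
    | zero =>
      have : Sig 0 = univ := by ext x; simp [hSig]
      rw [this, image_univ]; exact hr
    | succ n ih =>
      -- continuity from below to find the next bound
      have hmono : Monotone (fun m => f '' {x | (∀ i, i < n → x i ≤ B n i) ∧ x n ≤ m}) := by
        intro a b hab
        apply image_mono
        rintro x ⟨h1, h2⟩; exact ⟨h1, h2.trans hab⟩
      have hunion : (⋃ m, f '' {x | (∀ i, i < n → x i ≤ B n i) ∧ x n ≤ m}) = f '' Sig n := by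
        rw [← image_iUnion]
        have huu : (⋃ m, {x : ℕ → ℕ | (∀ i, i < n → x i ≤ B n i) ∧ x n ≤ m}) = Sig n := by
          ext x
          simp only [mem_iUnion, mem_setOf_eq, hSig]
          constructor
          · rintro ⟨m, h1, _⟩ i hi; rw [← hBN n i hi]; exact h1 i hi
          · intro h; exact ⟨x n, fun i hi => (hBN n i hi) ▸ h i hi, le_rfl⟩
        rw [huu]
      have hex : ∃ m, r < μ (f '' {x | (∀ i, i < n → x i ≤ B n i) ∧ x n ≤ m}) := by
        have h2 := hmono.measure_iUnion (μ := μ)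
        rw [hunion] at h2
        rw [← lt_iSup_iff]
        rw [← h2]
        exact ih
      have hcval : c (B n) n = hex.choose := dif_pos hex
      have hNn : N n = hex.choose := by
        show B (n+1) n = _
        have : B (n+1) = Function.update (B n) n (c (B n) n) := rfl
        rw [this, Function.update_self, hcval]
      have hspec := hex.choose_spec
      have hSigeq : Sig (n+1) = {x | (∀ i, i < n → x i ≤ B n i) ∧ x n ≤ hex.choose} := by
        ext x
        simp only [hSig, mem_setOf_eq]
        constructor
        · intro h
          refine ⟨fun i hi => (hBN n i hi) ▸ h i (by omega), hNn ▸ h n (by omega)⟩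
        · rintro ⟨h1, h2⟩ i hi
          rcases Nat.lt_or_ge i n with h | h
          · rw [← hBN n i h]; exact h1 i h
          · have : i = n := by omega
            subst this; rw [hNn]; exact h2
      rw [hSigeq]; exact hspec
  -- the compact set
  set SigInf : Set (ℕ → ℕ) := {x | ∀ i, x i ≤ N i} with hSigInf
  have hSigInfeq : SigInf = Set.pi univ fun i => Set.Iic (N i) := by
    ext x; simp [hSigInf, Set.mem_pi, Pi.le_def]
  have hSigInfCpt : IsCompact SigInf := by
    rw [hSigInfeq]; exact isCompact_univ_pi fun i => (Set.finite_Iic _).isCompact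
  refine ⟨f '' SigInf, image_subset_range _ _, hSigInfCpt.image fcont, ?_⟩
  by_contra hcon
  push_neg at hcon
  obtain ⟨U, hUsub, hUopen, hUlt⟩ := Set.exists_isOpen_lt_of_lt _ r hcon
  -- claim: some f '' Sig n is inside U
  have : ∃ n, f '' Sig n ⊆ U := by
    by_contra hno
    push_neg at hno
    have hno' : ∀ n, ∃ x, x ∈ Sig n ∧ f x ∉ U := by
      intro n
      obtain ⟨y, hy, hyU⟩ := Set.not_subset.mp (hno n)
      obtain ⟨x, hx, rfl⟩ := hy
      exact ⟨x, hx, hyU⟩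
    choose x hx hxU using hno'
    set z : ℕ → (ℕ → ℕ) := fun n i => min (x n i) (N i) with hz
    have hzmem : ∀ n, z n ∈ SigInf := fun n i => min_le_right _ _
    obtain ⟨l, hl, ψ, hψ, hzl⟩ := hSigInfCpt.tendsto_subseq hzmem
    have hxl : Tendsto (fun k => x (ψ k)) atTop (𝓝 l) := by
      rw [tendsto_pi_nhds]
      intro i
      have hzi : Tendsto (fun k => z (ψ k) i) atTop (𝓝 (l i)) :=
        (continuous_apply i).continuousAt.tendsto.comp hzl
      apply hzi.congr'
      filter_upwards [eventually_gt_atTop i] with k hk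
      have hik : i < ψ k := lt_of_lt_of_le hk (hψ.le_apply)
      have : x (ψ k) i ≤ N i := hx (ψ k) i hik
      simp [hz, min_eq_left this]
    have : Tendsto (fun k => f (x (ψ k))) atTop (𝓝 (f l)) := (fcont.tendsto l).comp hxl
    have hflU : f l ∈ U := hUsub ⟨l, hl, rfl⟩
    have := this.eventually (hUopen.mem_nhds hflU)
    obtain ⟨k, hk⟩ := this.exists
    exact hxU (ψ k) hk
  obtain ⟨n, hn⟩ := this
  exact absurd ((key n).trans_le (measure_mono hn)) (not_lt.mpr hUlt.le)

theorem AnalyticSet.nullMeasurableSet' {A : Set X} (hA : AnalyticSet A) :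
    NullMeasurableSet A μ := by
  rcases eq_or_ne (μ A) 0 with h0 | h0
  · exact NullMeasurableSet.of_null h0
  have hne : μ A ≠ ⊤ := measure_ne_top μ A
  have hK : ∀ k : ℕ, ∃ K, K ⊆ A ∧ IsCompact K ∧ μ A - 1/(k+1) ≤ μ K := by
    intro k
    apply hA.exists_isCompact_le (μ := μ)
    exact ENNReal.sub_lt_self hne h0 (by simp)
  choose K hKA hKc hKm using hK
  set B : Set X := ⋃ k, K k with hBdef
  have hBA : B ⊆ A := iUnion_subset hKA
  have hBmeas : MeasurableSet B :=
    MeasurableSet.iUnion fun k => (hKc k).isClosed.measurableSet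
  have hBge : μ A ≤ μ B := by
    refine ENNReal.le_of_forall_pos_le_add fun ε hε hB => ?_
    obtain ⟨k, hk⟩ := ENNReal.exists_inv_nat_lt (show (ε : ℝ≥0∞) ≠ 0 by simpa using hε.ne')
    have h1 : (1 : ℝ≥0∞)/(k+1) ≤ ε := by
      rw [one_div]
      refine le_trans ?_ hk.le
      refine ENNReal.inv_le_inv.2 ?_
      exact_mod_cast Nat.le_succ k
    calc μ A ≤ μ A - 1/(k+1) + 1/(k+1) := le_tsub_add
      _ ≤ μ (K k) + ε := add_le_add (hKm k) h1
      _ ≤ μ B + ε := add_le_add_left (measure_mono (subset_iUnion K k)) ε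
  have hBeq : μ B = μ A := le_antisymm (measure_mono hBA) hBge
  have hdiff : μ (toMeasurable μ A \ B) = 0 := by
    rw [measure_diff (hBA.trans (subset_toMeasurable μ A)) hBmeas.nullMeasurableSet
      (hBeq ▸ hne), measure_toMeasurable, ← hBeq, tsub_self]
  have hAeq : A = B ∪ (A \ B) := (Set.union_diff_cancel hBA).symm
  rw [hAeq]
  refine hBmeas.nullMeasurableSet.union (NullMeasurableSet.of_null ?_)
  exact measure_mono_null (diff_subset_diff_left (subset_toMeasurable μ A)) hdiff

end Capacitability
end MeasureTheory

end AuxCapacitability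

section AuxProjection
open MeasurableSpace
open scoped ENNReal

section Factor

variable {Ξ : Type*} [MeasurableSpace Ξ] {E : Type*} [MeasurableSpace E]

/-- Any set in a product σ-algebra is measurable w.r.t. a countably generated
sub-σ-algebra of the first factor (times the full second factor). -/
lemma exists_countably_generated_prod {M : Set (Ξ × E)} (hM : MeasurableSet M) :
    ∃ g : ℕ → Set Ξ, (∀ n, MeasurableSet (g n)) ∧
      MeasurableSet[(generateFrom (Set.range g)).prod ‹MeasurableSpace E›] M := by
  have key : ∀ (M : Set (Ξ × E)) (_ : MeasurableSet M),
      ∃ g : ℕ → Set Ξ, (∀ n, MeasurableSet (g n)) ∧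
        MeasurableSet[(generateFrom (Set.range g)).prod ‹MeasurableSpace E›] M := by
    have hgen : (Prod.instMeasurableSpace : MeasurableSpace (Ξ × E)) =
        generateFrom (image2 (· ×ˢ ·) { s : Set Ξ | MeasurableSet s }
          { t : Set E | MeasurableSet t }) := generateFrom_prod.symm
    intro M hM
    rw [hgen] at hM
    clear hgen
    induction hM with
    | basic u hu =>
      obtain ⟨A, hA, B, hB, rfl⟩ := hu
      refine ⟨fun _ => A, fun _ => hA, ?_⟩
      exact MeasurableSet.prod (measurableSet_generateFrom ⟨0, rfl⟩) hB
    | empty =>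
      refine ⟨fun _ => ∅, fun _ => MeasurableSet.empty, ?_⟩
      exact @MeasurableSet.empty _ ((generateFrom (Set.range fun _ : ℕ => (∅ : Set Ξ))).prod _)
    | compl u _ ih =>
      obtain ⟨g, hg, hmeas⟩ := ih
      exact ⟨g, hg, hmeas.compl⟩
    | iUnion s _ ih =>
      choose g hg hmeas using ih
      refine ⟨fun n => g (Nat.unpair n).1 (Nat.unpair n).2,
        fun n => hg _ _, MeasurableSet.iUnion fun k => ?_⟩
      have hle : generateFrom (Set.range (g k)) ≤
          generateFrom (Set.range fun n => g (Nat.unpair n).1 (Nat.unpair n).2) := by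
        refine generateFrom_le fun s hs => ?_
        obtain ⟨j, rfl⟩ := hs
        apply measurableSet_generateFrom
        exact ⟨Nat.pair k j, by simp⟩
      have hle2 : (generateFrom (Set.range (g k))).prod ‹MeasurableSpace E› ≤
          (generateFrom (Set.range fun n => g (Nat.unpair n).1 (Nat.unpair n).2)).prod
            ‹MeasurableSpace E› :=
        sup_le_sup (MeasurableSpace.comap_mono hle) le_rfl
      exact hle2 _ (hmeas k)
  exact key M hM

end Factor

section Proj

variable {d : ℕ} {Ξ : Type*} [MeasurableSpace Ξ]

local notation "E" => EuclideanSpace ℝ (Fin d)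

lemma measurable_infEdist_section (ℙ : Measure Ξ) [IsProbabilityMeasure ℙ] [ℙ.IsComplete]
    {M : Set (Ξ × E)} (hM : MeasurableSet M) (t : E) :
    Measurable fun ξ => EMetric.infEdist t {z : E | (ξ, z) ∈ M} := by
  classical
  obtain ⟨g, hg, hMg⟩ := exists_countably_generated_prod hM
  set K : Type _ := ℕ → Bool with hK
  set m : Ξ → K := fun ξ n => if ξ ∈ g n then true else false with hm
  have hm_meas : Measurable m := by
    refine measurable_pi_lambda _ fun n => ?_
    exact Measurable.ite (hg n) measurable_const measurable_const
  have hle1 : generateFrom (Set.range g) ≤ MeasurableSpace.comap m inferInstance := by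
    refine generateFrom_le fun s hs => ?_
    obtain ⟨n, rfl⟩ := hs
    refine ⟨(fun y : K => y n) ⁻¹' {true}, (measurable_pi_apply n) (by simp), ?_⟩
    ext ξ
    simp [hm]
  -- M is measurable w.r.t. the comap of the product σ-algebra under m × id
  have hcomap : (MeasurableSpace.comap m inferInstance).prod
      (inferInstance : MeasurableSpace E) =
      MeasurableSpace.comap (Prod.map m id) (Prod.instMeasurableSpace) := by
    have h1 : MeasurableSpace.comap (Prod.map m id)
        (Prod.instMeasurableSpace : MeasurableSpace (K × E)) =
        MeasurableSpace.comap (Prod.map m id)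
          (MeasurableSpace.comap Prod.fst inferInstance ⊔
            MeasurableSpace.comap Prod.snd inferInstance) := rfl
    rw [h1, MeasurableSpace.comap_sup, MeasurableSpace.comap_comp, MeasurableSpace.comap_comp,
      show (Prod.fst ∘ Prod.map m id : Ξ × E → K) = m ∘ Prod.fst from rfl,
      show (Prod.snd ∘ Prod.map m id : Ξ × E → E) = Prod.snd from rfl,
      ← MeasurableSpace.comap_comp]
    rfl
  have hMK : MeasurableSet[MeasurableSpace.comap (Prod.map m id)
      (Prod.instMeasurableSpace : MeasurableSpace (K × E))] M := by
    rw [← hcomap]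
    exact (sup_le_sup (MeasurableSpace.comap_mono hle1) le_rfl) _ hMg
  rw [measurableSet_comap] at hMK
  obtain ⟨M', hM', hMeq⟩ := hMK
  have hsec : ∀ ξ, {z : E | (ξ, z) ∈ M} = {z : E | (m ξ, z) ∈ M'} := by
    intro ξ
    ext z
    constructor
    · intro hz; rw [← hMeq] at hz; exact hz
    · intro hz; rw [← hMeq]; exact hz
  have hfun : (fun ξ => EMetric.infEdist t {z : E | (ξ, z) ∈ M}) =
      (fun y : K => EMetric.infEdist t {z : E | (y, z) ∈ M'}) ∘ m := by
    funext ξ; simp only [Function.comp_apply, hsec ξ]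
  rw [hfun]
  set ν : Measure K := Measure.map m ℙ with hν
  haveI : IsProbabilityMeasure ν := Measure.isProbabilityMeasure_map hm_meas.aemeasurable
  -- it suffices to show each sublevel set pulls back to a measurable set
  have hsub : ∀ r : ℝ≥0∞, MeasurableSet (m ⁻¹' {y : K | EMetric.infEdist t {z : E | (y, z) ∈ M'} < r}) := by
    intro r
    set S : Set K := {y : K | EMetric.infEdist t {z : E | (y, z) ∈ M'} < r} with hS
    have hSimg : S = Prod.fst '' (M' ∩ {p : K × E | edist t p.2 < r}) := by
      ext y
      simp only [hS, mem_setOf_eq, mem_image, mem_inter_iff, EMetric.infEdist, Metric.infEDist_lt_iff]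
      constructor
      · rintro ⟨z, hz, hzr⟩; exact ⟨(y, z), ⟨hz, hzr⟩, rfl⟩
      · rintro ⟨⟨y', z⟩, ⟨hz, hzr⟩, rfl⟩; exact ⟨z, hz, hzr⟩
    have hAn : AnalyticSet S := by
      rw [hSimg]
      refine MeasurableSet.analyticSet_image ?_ measurable_fst
      exact hM'.inter ((measurable_const.edist measurable_snd) measurableSet_Iio)
    have hnull : NullMeasurableSet S ν := hAn.nullMeasurableSet' ν
    obtain ⟨T, hT, hST⟩ := hnull
    -- pull back the a.e.-equality
    have hnull2 : ∀ W : Set K, ν W = 0 → ℙ (m ⁻¹' W) = 0 := by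
      intro W hW
      have h1 : ℙ (m ⁻¹' toMeasurable ν W) = ν (toMeasurable ν W) :=
        (Measure.map_apply hm_meas (measurableSet_toMeasurable ν W)).symm
      rw [measure_toMeasurable, hW] at h1
      exact measure_mono_null (preimage_mono (subset_toMeasurable ν W)) h1
    have hpre : m ⁻¹' S =ᶠ[ae ℙ] m ⁻¹' T := by
      rw [ae_eq_set] at hST ⊢
      refine ⟨?_, ?_⟩
      · rw [← preimage_diff]; exact hnull2 _ hST.1
      · rw [← preimage_diff]; exact hnull2 _ hST.2
    exact ((hm_meas hT).nullMeasurableSet.congr hpre.symm).measurable_of_complete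
  -- conclude measurability from the sublevel sets
  refine measurable_of_Iio fun r => ?_
  exact hsub r
end Proj


end AuxProjection

open scoped ENNReal
open MeasurableSpace
open ProbabilityTheory (IndepFun IdentDistrib)

section SLLN

variable {Ξ : Type*} [MeasurableSpace Ξ] {ℙ : Measure Ξ} [IsProbabilityMeasure ℙ]
  {P : Measure (ℕ → Ξ)} [IsProbabilityMeasure P]

lemma marginal_map (hP : IsProductMeasure P ℙ) (i : ℕ) :
    Measure.map (fun ω : ℕ → Ξ => ω i) P = ℙ := by
  refine Measure.ext fun A hA => ?_
  rw [Measure.map_apply (measurable_pi_apply i) hA]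
  have h1 : (fun ω : ℕ → Ξ => ω i) ⁻¹' A = {ω : ℕ → Ξ | ∀ j ∈ ({i} : Finset ℕ), ω j ∈ A} := by
    ext ω; simp
  rw [h1, hP {i} (fun _ => A) (fun _ => hA), Finset.prod_singleton]

lemma indep_eval (hP : IsProductMeasure P ℙ) {i j : ℕ} (hij : i ≠ j) :
    IndepFun (fun ω : ℕ → Ξ => ω i) (fun ω : ℕ → Ξ => ω j) P := by
  rw [ProbabilityTheory.indepFun_iff_measure_inter_preimage_eq_mul]
  intro A B hA hB
  classical
  set D : ℕ → Set Ξ := fun k => if k = i then A else B with hD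
  have hDm : ∀ k, MeasurableSet (D k) := by
    intro k; by_cases h : k = i <;> simp [hD, h, hA, hB]
  have h1 : (fun ω : ℕ → Ξ => ω i) ⁻¹' A ∩ (fun ω : ℕ → Ξ => ω j) ⁻¹' B =
      {ω : ℕ → Ξ | ∀ k ∈ ({i, j} : Finset ℕ), ω k ∈ D k} := by
    ext ω
    simp only [mem_inter_iff, mem_preimage, mem_setOf_eq, Finset.mem_insert, Finset.mem_singleton]
    constructor
    · rintro ⟨h1, h2⟩ k hk
      rcases hk with rfl | rfl
      · simpa [hD] using h1
      · simpa [hD, hij.symm] using h2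
    · intro h
      refine ⟨by simpa [hD] using h i (Or.inl rfl), by simpa [hD, hij.symm] using h j (Or.inr rfl)⟩
  rw [h1, hP {i, j} D hDm, Finset.prod_pair hij]
  have h2 : P ((fun ω : ℕ → Ξ => ω i) ⁻¹' A) = ℙ A := by
    rw [← Measure.map_apply (measurable_pi_apply i) hA, marginal_map hP i]
  have h3 : P ((fun ω : ℕ → Ξ => ω j) ⁻¹' B) = ℙ B := by
    rw [← Measure.map_apply (measurable_pi_apply j) hB, marginal_map hP j]
  rw [h2, h3]
  simp [hD, hij.symm]

lemma slln_eval (hP : IsProductMeasure P ℙ) (h : Ξ → ℝ) (hh : Measurable h)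
    (hb : ∀ x, |h x| ≤ 1) :
    ∀ᵐ ω ∂P, Tendsto (fun n : ℕ => (n : ℝ)⁻¹ • ∑ i ∈ Finset.range n, h (ω i)) atTop
      (𝓝 (∫ x, h x ∂ℙ)) := by
  have hint : Integrable (fun ω : ℕ → Ξ => h (ω 0)) P := by
    refine Integrable.mono' (integrable_const 1) ?_ ?_
    · exact (hh.comp (measurable_pi_apply 0)).aestronglyMeasurable
    · exact Eventually.of_forall fun ω => by simpa using hb (ω 0)
  have hid : ∀ i : ℕ, IdentDistrib (fun ω : ℕ → Ξ => h (ω i)) (fun ω : ℕ → Ξ => h (ω 0)) P P := by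
    intro i
    have : IdentDistrib (fun ω : ℕ → Ξ => ω i) (fun ω : ℕ → Ξ => ω 0) P P :=
      ⟨(measurable_pi_apply i).aemeasurable, (measurable_pi_apply 0).aemeasurable, by
        rw [marginal_map hP i, marginal_map hP 0]⟩
    exact this.comp hh
  have hindep : Pairwise (Function.onFun (fun f g => IndepFun f g P) fun i (ω : ℕ → Ξ) => h (ω i)) := by
    intro i j hij
    exact (indep_eval hP hij).comp hh hh
  have hE : ∫ ω, h (ω 0) ∂P = ∫ x, h x ∂ℙ := by
    rw [← marginal_map hP 0, integral_map (measurable_pi_apply 0).aemeasurable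
      hh.aestronglyMeasurable]
  have := ProbabilityTheory.strong_law_ae (μ := P) (fun i (ω : ℕ → Ξ) => h (ω i)) hint hindep hid
  rw [hE] at this
  exact this

end SLLN

section L1

variable {d : ℕ} {Ξ : Type*} [MeasurableSpace Ξ]

variable (φ : Ξ → (EuclideanSpace ℝ (Fin d)) → EReal)

/-- Truncated distance to the level set. -/
noncomputable def htf (t : (EuclideanSpace ℝ (Fin d))) (ξ : Ξ) : ℝ :=
  (min (EMetric.infEdist t {z : (EuclideanSpace ℝ (Fin d)) | φ ξ z ≤ 0}) 1).toReal

variable {φ}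

lemma htf_nonneg (t : (EuclideanSpace ℝ (Fin d))) (ξ : Ξ) : 0 ≤ htf φ t ξ := ENNReal.toReal_nonneg

lemma htf_le_one (t : (EuclideanSpace ℝ (Fin d))) (ξ : Ξ) : htf φ t ξ ≤ 1 := by
  have : min (EMetric.infEdist t {z : (EuclideanSpace ℝ (Fin d)) | φ ξ z ≤ 0}) 1 ≤ 1 := min_le_right _ _
  simpa [htf] using ENNReal.toReal_mono (by simp) this

lemma htf_lipschitz (t s : (EuclideanSpace ℝ (Fin d))) (ξ : Ξ) : htf φ t ξ ≤ htf φ s ξ + dist t s := by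
  set F := {z : (EuclideanSpace ℝ (Fin d)) | φ ξ z ≤ 0}
  set a := EMetric.infEdist t F
  set b := EMetric.infEdist s F
  have h1 : a ≤ b + edist t s := EMetric.infEdist_le_infEdist_add_edist
  have h2 : min a 1 ≤ min b 1 + edist t s := by
    rcases le_total b 1 with hb | hb
    · rw [min_eq_left hb]
      exact le_trans (min_le_left _ _) h1
    · rw [min_eq_right hb]
      exact le_trans (min_le_right _ _) le_self_add
  have hne : min b 1 + edist t s ≠ ⊤ :=
    ENNReal.add_ne_top.2 ⟨ne_top_of_le_ne_top (by simp) (min_le_right _ _), edist_ne_top t s⟩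
  calc htf φ t ξ ≤ (min b 1 + edist t s).toReal := ENNReal.toReal_mono hne h2
    _ = htf φ s ξ + dist t s := by
        rw [ENNReal.toReal_add (ne_top_of_le_ne_top (by simp) (min_le_right _ _))
          (edist_ne_top t s), dist_edist]
        rfl

lemma htf_le_dist_of_mem {z : (EuclideanSpace ℝ (Fin d))} {ξ : Ξ} (hz : φ ξ z ≤ 0) (t : (EuclideanSpace ℝ (Fin d))) : htf φ t ξ ≤ dist t z := by
  have h1 : EMetric.infEdist t {w : (EuclideanSpace ℝ (Fin d)) | φ ξ w ≤ 0} ≤ edist t z :=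
    EMetric.infEdist_le_edist_of_mem hz
  have h2 : min (EMetric.infEdist t {w : (EuclideanSpace ℝ (Fin d)) | φ ξ w ≤ 0}) 1 ≤ edist t z :=
    le_trans (min_le_left _ _) h1
  rw [dist_edist]
  exact ENNReal.toReal_mono (edist_ne_top t z) h2

lemma htf_eq_zero_imp (hφ_lsc : ∀ ξ, LowerSemicontinuous (φ ξ)) {z : (EuclideanSpace ℝ (Fin d))} {ξ : Ξ}
    (h : htf φ z ξ = 0) : φ ξ z ≤ 0 := by
  have hmin : min (EMetric.infEdist z {w : (EuclideanSpace ℝ (Fin d)) | φ ξ w ≤ 0}) 1 = 0 := by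
    rcases ENNReal.toReal_eq_zero_iff _ |>.1 h with h0 | h0
    · exact h0
    · exact absurd h0 (ne_top_of_le_ne_top (by simp) (min_le_right _ _))
  have hinf : EMetric.infEdist z {w : (EuclideanSpace ℝ (Fin d)) | φ ξ w ≤ 0} = 0 := by
    rcases min_eq_iff.1 hmin with ⟨h0, _⟩ | ⟨h0, _⟩
    · exact h0
    · simp at h0
  have hcl : IsClosed {w : (EuclideanSpace ℝ (Fin d)) | φ ξ w ≤ 0} := by
    have : {w : (EuclideanSpace ℝ (Fin d)) | φ ξ w ≤ 0} = ((φ ξ) ⁻¹' (Set.Ioi 0))ᶜ := by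
      ext w; simp [not_lt]
    rw [this]
    exact ((hφ_lsc ξ).isOpen_preimage 0).isClosed_compl
  have := EMetric.mem_closure_iff_infEdist_zero.2 hinf
  rwa [hcl.closure_eq] at this

lemma htf_measurable (ℙ : Measure Ξ) [IsProbabilityMeasure ℙ] [ℙ.IsComplete] (hφ_meas : Measurable fun p : Ξ × (EuclideanSpace ℝ (Fin d)) => φ p.1 p.2) (t : (EuclideanSpace ℝ (Fin d))) :
    Measurable (htf φ t) := by
  have hM : MeasurableSet {p : Ξ × (EuclideanSpace ℝ (Fin d)) | φ p.1 p.2 ≤ 0} := hφ_meas measurableSet_Iic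
  have h1 : Measurable fun ξ => EMetric.infEdist t {z : (EuclideanSpace ℝ (Fin d)) | (ξ, z) ∈ {p : Ξ × (EuclideanSpace ℝ (Fin d)) | φ p.1 p.2 ≤ 0}} :=
    measurable_infEdist_section ℙ hM t
  exact (h1.min measurable_const).ennreal_toReal

theorem key_as (ℙ : Measure Ξ) [IsProbabilityMeasure ℙ] [ℙ.IsComplete]
    (P : Measure (ℕ → Ξ)) [IsProbabilityMeasure P] (hP : IsProductMeasure P ℙ)
    (hφ_meas : Measurable fun p : Ξ × (EuclideanSpace ℝ (Fin d)) => φ p.1 p.2)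
    (hφ_lsc : ∀ ξ, LowerSemicontinuous (φ ξ)) :
    ∀ᵐ ω ∂P, ∀ z : (EuclideanSpace ℝ (Fin d)), (∀ i, φ (ω i) z ≤ 0) → ∀ᵐ ξ ∂ℙ, φ ξ z ≤ 0 := by
  obtain ⟨T, hTc, hTd⟩ := TopologicalSpace.exists_countable_dense (EuclideanSpace ℝ (Fin d))
  have hTne : T.Nonempty := hTd.nonempty
  obtain ⟨t, rfl⟩ := hTc.exists_eq_range hTne
  have hslln : ∀ᵐ ω ∂P, ∀ k : ℕ,
      Tendsto (fun n : ℕ => (n : ℝ)⁻¹ • ∑ i ∈ Finset.range n, htf φ (t k) (ω i)) atTop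
        (𝓝 (∫ x, htf φ (t k) x ∂ℙ)) := by
    rw [ae_all_iff]
    intro k
    exact slln_eval hP (htf φ (t k)) (htf_measurable ℙ hφ_meas (t k))
      (fun x => abs_le.2 ⟨le_trans (by norm_num) (htf_nonneg _ _), htf_le_one _ _⟩)
  filter_upwards [hslln] with ω hω
  intro z hz
  -- the averaged empirical bound gives a bound on the integrals
  have hIbound : ∀ k, ∫ x, htf φ (t k) x ∂ℙ ≤ dist (t k) z := by
    intro k
    refine le_of_tendsto (hω k) ?_
    filter_upwards [eventually_ge_atTop 1] with n hn
    have hterm : ∀ i ∈ Finset.range n, htf φ (t k) (ω i) ≤ dist (t k) z :=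
      fun i _ => htf_le_dist_of_mem (hz i) (t k)
    have hsum : ∑ i ∈ Finset.range n, htf φ (t k) (ω i) ≤ n * dist (t k) z := by
      calc ∑ i ∈ Finset.range n, htf φ (t k) (ω i) ≤ ∑ _i ∈ Finset.range n, dist (t k) z :=
            Finset.sum_le_sum hterm
        _ = n * dist (t k) z := by rw [Finset.sum_const, Finset.card_range]; ring
    have hnpos : (0 : ℝ) < n := by exact_mod_cast hn
    rw [smul_eq_mul, inv_mul_le_iff₀ hnpos]
    exact hsum
  -- approximating sequence from the dense set
  have hκ : ∀ j : ℕ, ∃ k, dist (t k) z < 1 / (j + 1) := by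
    intro j
    have hz' : z ∈ closure (Set.range t) := hTd z
    rw [Metric.mem_closure_iff] at hz'
    obtain ⟨y, hy, hdy⟩ := hz' (1 / (j + 1)) (by positivity)
    obtain ⟨k, rfl⟩ := hy
    exact ⟨k, by rwa [dist_comm]⟩
  choose κ hκ using hκ
  -- pointwise convergence towards htf z
  have hconv : ∀ ξ, Tendsto (fun j => htf φ (t (κ j)) ξ) atTop (𝓝 (htf φ z ξ)) := by
    intro ξ
    rw [← tendsto_sub_nhds_zero_iff]
    refine squeeze_zero_norm (a := fun j : ℕ => 1 / ((j : ℝ) + 1)) (fun j => ?_)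
      tendsto_one_div_add_atTop_nhds_zero_nat
    · have h1 := htf_lipschitz (φ := φ) (t (κ j)) z ξ
      have h2 := htf_lipschitz (φ := φ) z (t (κ j)) ξ
      rw [dist_comm] at h2
      have := (hκ j).le
      rw [Real.norm_eq_abs, abs_le]
      constructor <;> nlinarith [dist_nonneg (x := t (κ j)) (y := z)]
  set G : Ξ → ℝ≥0∞ := fun ξ => liminf (fun j => ENNReal.ofReal (htf φ (t (κ j)) ξ)) atTop with hG
  have hGmeas : Measurable G :=
    Measurable.liminf fun j => (htf_measurable ℙ hφ_meas (t (κ j))).ennreal_ofReal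
  have hGeq : ∀ ξ, G ξ = ENNReal.ofReal (htf φ z ξ) := by
    intro ξ
    exact (ENNReal.tendsto_ofReal (hconv ξ)).liminf_eq
  have hint : ∀ k, Integrable (htf φ (t k)) ℙ := by
    intro k
    refine Integrable.mono' (integrable_const 1) (htf_measurable ℙ hφ_meas (t k)).aestronglyMeasurable ?_
    exact Eventually.of_forall fun ξ => by
      rw [Real.norm_eq_abs]; exact abs_le.2 ⟨le_trans (by norm_num) (htf_nonneg _ _), htf_le_one _ _⟩
  have hlint : ∫⁻ ξ, G ξ ∂ℙ = 0 := by
    have h1 : ∫⁻ ξ, G ξ ∂ℙ ≤ liminf (fun j => ∫⁻ ξ, ENNReal.ofReal (htf φ (t (κ j)) ξ) ∂ℙ) atTop :=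
      lintegral_liminf_le fun j => (htf_measurable ℙ hφ_meas (t (κ j))).ennreal_ofReal
    have h2 : ∀ j, ∫⁻ ξ, ENNReal.ofReal (htf φ (t (κ j)) ξ) ∂ℙ ≤ ENNReal.ofReal (1 / (j + 1)) := by
      intro j
      rw [← ofReal_integral_eq_lintegral_ofReal (hint (κ j))
        (Eventually.of_forall fun ξ => htf_nonneg _ _)]
      exact ENNReal.ofReal_le_ofReal ((hIbound (κ j)).trans (hκ j).le)
    have h3 : liminf (fun j => ∫⁻ ξ, ENNReal.ofReal (htf φ (t (κ j)) ξ) ∂ℙ) atTop ≤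
        liminf (fun j : ℕ => ENNReal.ofReal (1 / (j + 1))) atTop :=
      liminf_le_liminf (Eventually.of_forall h2)
    have h4 : liminf (fun j : ℕ => ENNReal.ofReal (1 / ((j : ℝ) + 1))) atTop = 0 := by
      refine Tendsto.liminf_eq ?_
      have := ENNReal.tendsto_ofReal (tendsto_one_div_add_atTop_nhds_zero_nat)
      simpa using this
    refine le_antisymm ?_ (zero_le)
    calc ∫⁻ ξ, G ξ ∂ℙ ≤ _ := h1
      _ ≤ _ := h3
      _ = 0 := h4
  have hae : ∀ᵐ ξ ∂ℙ, G ξ = 0 := (lintegral_eq_zero_iff hGmeas).1 hlint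
  filter_upwards [hae] with ξ hξ
  rw [hGeq ξ, ENNReal.ofReal_eq_zero] at hξ
  exact htf_eq_zero_imp hφ_lsc (le_antisymm hξ (htf_nonneg _ _))

end L1


section MoreauLemmas

variable {d : ℕ}

lemma moreau_le (g : EuclideanSpace ℝ (Fin d) → EReal) (lam : ℝ)
    (x u : EuclideanSpace ℝ (Fin d)) :
    moreau g lam x ≤ g u + ((‖x - u‖ ^ 2 / (2 * lam) : ℝ) : EReal) := iInf_le _ u

lemma moreau_le_self (g : EuclideanSpace ℝ (Fin d) → EReal) (lam : ℝ)
    (x : EuclideanSpace ℝ (Fin d)) : moreau g lam x ≤ g x := by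
  have := moreau_le g lam x x
  simpa [sub_self] using this

lemma EReal.coe_sub_le_of_le_add {a : EReal} {p q : ℝ} (h : (p : EReal) ≤ a + (q : EReal)) :
    ((p - q : ℝ) : EReal) ≤ a := by
  induction a with
  | bot => simp only [EReal.bot_add] at h; exact absurd h (by simp)
  | coe r =>
    norm_cast at h ⊢
    linarith
  | top => exact le_top

/-- The key epigraphical lower bound for Moreau envelopes along vanishing parameters. -/
lemma moreau_lower {g : EuclideanSpace ℝ (Fin d) → EReal}
    (hg_lsc : LowerSemicontinuous g)
    {lam0 : ℝ} (hlam0 : 0 < lam0) {r : ℝ} {x₀ : EuclideanSpace ℝ (Fin d)}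
    (hmin : ∀ w, (r : EReal) ≤ g w + ((‖x₀ - w‖ ^ 2 / (2 * lam0) : ℝ) : EReal))
    {μ : ℕ → ℝ} (hμpos : ∀ n, 0 < μ n) (hμ0 : Tendsto μ atTop (𝓝 0))
    {u : ℕ → EuclideanSpace ℝ (Fin d)} (hu : Tendsto u atTop (𝓝 x₀))
    {c : ℝ} (hc : (c : EReal) < g x₀) :
    ∀ᶠ n in atTop, (c : EReal) ≤ moreau g (μ n) (u n) := by
  obtain ⟨δ, hδpos, hδ⟩ : ∃ δ > 0, ∀ ⦃y⦄, dist y x₀ < δ → (c : EReal) < g y :=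
    Metric.eventually_nhds_iff.1 (hg_lsc x₀ c hc)
  set M : ℝ := max 1 (c - r + δ ^ 2 / (2 * lam0)) with hM
  have hMpos : 0 < M := lt_of_lt_of_le one_pos (le_max_left _ _)
  set Θ : ℝ := δ ^ 2 / (8 * M) with hΘ
  have hΘpos : 0 < Θ := by positivity
  have h1 : ∀ᶠ n in atTop, dist (u n) x₀ < δ / 2 := by
    have := hu (Metric.ball_mem_nhds x₀ (by positivity : (0:ℝ) < δ / 2))
    simpa [Metric.mem_ball] using this
  have h2 : ∀ᶠ n in atTop, μ n < Θ := (tendsto_order.1 hμ0).2 Θ hΘpos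
  have h3 : ∀ᶠ n in atTop, μ n < lam0 / 4 := (tendsto_order.1 hμ0).2 _ (by positivity)
  filter_upwards [h1, h2, h3] with n hn1 hn2 hn3
  refine le_iInf fun w => ?_
  by_cases hw : dist w x₀ < δ
  · refine le_trans (hδ hw).le ?_
    nth_rewrite 1 [← add_zero (g w)]
    refine add_le_add_right ?_ (g w)
    have : (0:ℝ) ≤ ‖u n - w‖ ^ 2 / (2 * μ n) :=
      div_nonneg (sq_nonneg _) (by linarith [hμpos n])
    exact_mod_cast this
  · push_neg at hw
    set t : ℝ := dist w x₀ with ht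
    have htδ : δ ≤ t := hw
    have hgw : ((r - ‖x₀ - w‖ ^ 2 / (2 * lam0) : ℝ) : EReal) ≤ g w :=
      EReal.coe_sub_le_of_le_add (hmin w)
    have hnorm : ‖x₀ - w‖ = t := by
      rw [← dist_eq_norm, dist_comm x₀ w]
    have hμn : 0 < μ n := hμpos n
    have hQ : t ^ 2 / (8 * μ n) ≤ ‖u n - w‖ ^ 2 / (2 * μ n) := by
      have h4 : t / 2 ≤ ‖u n - w‖ := by
        have htr := dist_triangle w (u n) x₀
        have h5 : dist w (u n) = dist (u n) w := dist_comm _ _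
        have h6 : dist (u n) w = ‖u n - w‖ := dist_eq_norm _ _
        have hd2 : dist (u n) x₀ < δ / 2 := hn1
        nlinarith
      have h5 : (t / 2) ^ 2 ≤ ‖u n - w‖ ^ 2 := by
        have h6 : (0:ℝ) ≤ t / 2 := by positivity
        nlinarith
      calc t ^ 2 / (8 * μ n) = (t / 2) ^ 2 / (2 * μ n) := by ring
        _ ≤ ‖u n - w‖ ^ 2 / (2 * μ n) := by
            apply div_le_div_of_nonneg_right h5 ?_ |>.trans_eq rfl
            positivity
    have hreal : c ≤ r - t ^ 2 / (2 * lam0) + ‖u n - w‖ ^ 2 / (2 * μ n) := by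
      have hM2 : c - r + δ ^ 2 / (2 * lam0) ≤ M := le_max_right _ _
      have hμΘ : 8 * μ n * M < δ ^ 2 := by
        have h7 := hn2
        rw [hΘ, lt_div_iff₀ (by positivity : (0:ℝ) < 8 * M)] at h7
        nlinarith
      have hkey : c ≤ r - δ ^ 2 / (2 * lam0) + δ ^ 2 / (8 * μ n) := by
        have h8 : 8 * μ n * (c - r + δ ^ 2 / (2 * lam0)) < δ ^ 2 := by nlinarith
        have h9 : c - r + δ ^ 2 / (2 * lam0) < δ ^ 2 / (8 * μ n) := by
          rw [lt_div_iff₀ (by positivity : (0:ℝ) < 8 * μ n)]; nlinarith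
        linarith
      have hβ : (0:ℝ) ≤ 1 / (8 * μ n) - 1 / (2 * lam0) := by
        have := one_div_le_one_div_of_le (by positivity : (0:ℝ) < 8 * μ n)
          (by linarith : 8 * μ n ≤ 2 * lam0)
        linarith
      have ht2 : δ ^ 2 ≤ t ^ 2 := by nlinarith
      have hmul := mul_le_mul_of_nonneg_right ht2 hβ
      have e1 : δ ^ 2 / (8 * μ n) - δ ^ 2 / (2 * lam0) = δ ^ 2 * (1 / (8 * μ n) - 1 / (2 * lam0)) := by
        ring
      have e2 : t ^ 2 / (8 * μ n) - t ^ 2 / (2 * lam0) = t ^ 2 * (1 / (8 * μ n) - 1 / (2 * lam0)) := by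
        ring
      linarith
    calc ((c : ℝ) : EReal) ≤ ((r - t ^ 2 / (2 * lam0) + ‖u n - w‖ ^ 2 / (2 * μ n) : ℝ) : EReal) := by
          exact_mod_cast hreal
      _ = ((r - t ^ 2 / (2 * lam0) : ℝ) : EReal) + ((‖u n - w‖ ^ 2 / (2 * μ n) : ℝ) : EReal) := by
          rw [← EReal.coe_add]
      _ ≤ g w + ((‖u n - w‖ ^ 2 / (2 * μ n) : ℝ) : EReal) := by
          refine add_le_add_left ?_ _
          rw [← hnorm] at *
          exact hgw

lemma EReal.exists_coe_le {a : EReal} (h : a ≠ ⊥) : ∃ r : ℝ, (r : EReal) ≤ a := by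
  induction a with
  | bot => simp at h
  | coe r => exact ⟨r, le_rfl⟩
  | top => exact ⟨0, le_top⟩

end MoreauLemmas


/-- Moreau-envelope scenario approach. For a proper lsc prox-bounded
`g : ℝ^d → ℝ ∪ {+∞}` with threshold `λ_g > 0`, a normal integrand `φ`, a bounded closed
set `C`, `λ_n ↓ 0` in `(0, λ_g)`, and measurable selections `x n ω` of minimizers of
`e_{λ_n} g` over `{x ∈ C : φ (ω i) x ≤ 0, i < n}`, for `P`-a.e. `ω`:
(a) `e_{λ_n} g (x n ω)` converges to the optimal value of the robust problem, and
(b) every cluster point of `(x n ω)` is a minimizer of the robust problem. -/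
theorem moreau_scenario_consistency {d : ℕ}
    {Ξ : Type*} [MeasurableSpace Ξ] (ℙ : Measure Ξ) [IsProbabilityMeasure ℙ] [ℙ.IsComplete]
    (P : Measure (ℕ → Ξ)) [IsProbabilityMeasure P] (hP : IsProductMeasure P ℙ)
    (g : EuclideanSpace ℝ (Fin d) → EReal)
    (hg_noBot : ∀ x, g x ≠ ⊥) (hg_proper : ∃ x, g x ≠ ⊤) (hg_lsc : LowerSemicontinuous g)
    (lamg : ℝ) (hlamg : 0 < lamg)
    (hprox : ∀ lam : ℝ, 0 < lam → lam < lamg → ∀ x, moreau g lam x ≠ ⊥)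
    (φ : Ξ → EuclideanSpace ℝ (Fin d) → EReal)
    (hφ_meas : Measurable fun p : Ξ × EuclideanSpace ℝ (Fin d) => φ p.1 p.2)
    (hφ_lsc : ∀ ξ, LowerSemicontinuous (φ ξ))
    (C : Set (EuclideanSpace ℝ (Fin d))) (hC_bdd : Bornology.IsBounded C)
    (hC_closed : IsClosed C)
    (hfeas : ∃ x ∈ C, g x < ⊤ ∧ ∀ᵐ ξ ∂ℙ, φ ξ x ≤ 0)
    (lam : ℕ → ℝ) (hlam_pos : ∀ n, 0 < lam n) (hlam_lt : ∀ n, lam n < lamg)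
    (hlam_anti : Antitone lam) (hlam_to0 : Tendsto lam atTop (𝓝 0))
    (x : ℕ → (ℕ → Ξ) → EuclideanSpace ℝ (Fin d)) (hx_meas : ∀ n, Measurable (x n))
    (hx_min : ∀ᵐ ω ∂P, ∀ n,
      x n ω ∈ {z ∈ C | ∀ i ∈ Finset.range n, φ (ω i) z ≤ 0} ∧
      ∀ y ∈ {z ∈ C | ∀ i ∈ Finset.range n, φ (ω i) z ≤ 0},
        moreau g (lam n) (x n ω) ≤ moreau g (lam n) y) :
    ∀ᵐ ω ∂P,
      Tendsto (fun n => moreau g (lam n) (x n ω)) atTop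
        (𝓝 (vOn g {z | z ∈ C ∧ ∀ᵐ ξ ∂ℙ, φ ξ z ≤ 0})) ∧
      ∀ x₀, MapClusterPt x₀ atTop (fun n => x n ω) →
        (x₀ ∈ C ∧ ∀ᵐ ξ ∂ℙ, φ ξ x₀ ≤ 0) ∧
        ∀ y, (y ∈ C ∧ ∀ᵐ ξ ∂ℙ, φ ξ y ≤ 0) → g x₀ ≤ g y := by

  classical
  have hCcpt : IsCompact C := Metric.isCompact_of_isClosed_isBounded hC_closed hC_bdd
  set S : Set (EuclideanSpace ℝ (Fin d)) := {z | z ∈ C ∧ ∀ᵐ ξ ∂ℙ, φ ξ z ≤ 0} with hS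
  set v : EReal := vOn g S with hv
  obtain ⟨xs, hxsC, hxsg, hxsae⟩ := hfeas
  have hxsS : xs ∈ S := ⟨hxsC, hxsae⟩
  -- near-optimal selections
  have hzfun : ∀ q : ℚ, ∃ z, z ∈ S ∧ (v < ((q : ℝ) : EReal) → g z < ((q : ℝ) : EReal)) := by
    intro q
    by_cases h : v < ((q : ℝ) : EReal)
    · have h1 : (⨅ z ∈ S, g z) < ((q : ℝ) : EReal) := h
      rw [iInf_lt_iff] at h1
      obtain ⟨z, hz⟩ := h1
      rw [iInf_lt_iff] at hz
      obtain ⟨hzS, hgz⟩ := hz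
      exact ⟨z, hzS, fun _ => hgz⟩
    · exact ⟨xs, hxsS, fun hc => absurd hc h⟩
  choose zf hzfS hzfg using hzfun
  have hsec : ∀ z : EuclideanSpace ℝ (Fin d), MeasurableSet {ξ | φ ξ z ≤ 0} := fun z =>
    (hφ_meas.comp (measurable_id.prodMk measurable_const)) measurableSet_Iic
  -- quadratic minorants
  have hquad : ∀ x₀ : EuclideanSpace ℝ (Fin d), ∃ r : ℝ,
      ∀ w, (r : EReal) ≤ g w + ((‖x₀ - w‖ ^ 2 / (2 * lam 0) : ℝ) : EReal) := by
    intro x₀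
    obtain ⟨r, hr⟩ := EReal.exists_coe_le (hprox (lam 0) (hlam_pos 0) (hlam_lt 0) x₀)
    exact ⟨r, fun w => hr.trans (moreau_le g (lam 0) x₀ w)⟩
  -- a.e. events
  have hA3 : ∀ᵐ ω ∂P, ∀ (q : ℚ) (i : ℕ), φ (ω i) (zf q) ≤ 0 := by
    rw [ae_all_iff]
    intro q
    rw [ae_all_iff]
    intro i
    exact (ae_map_iff (measurable_pi_apply i).aemeasurable (hsec (zf q))).1
      (by rw [marginal_map hP i]; exact (hzfS q).2)
  have hA2 := key_as ℙ P hP hφ_meas hφ_lsc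
  filter_upwards [hx_min, hA2, hA3] with ω hmin hkey hzfeas
  set u : ℕ → EReal := fun n => moreau g (lam n) (x n ω) with hudef
  -- upper bound
  have hupper : ∀ q : ℚ, v < ((q : ℝ) : EReal) → ∀ n, u n ≤ ((q : ℝ) : EReal) := by
    intro q hq n
    have hzC : zf q ∈ {z ∈ C | ∀ i ∈ Finset.range n, φ (ω i) z ≤ 0} :=
      ⟨(hzfS q).1, fun i _ => hzfeas q i⟩
    calc u n ≤ moreau g (lam n) (zf q) := (hmin n).2 (zf q) hzC
      _ ≤ g (zf q) := moreau_le_self g (lam n) (zf q)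
      _ ≤ ((q : ℝ) : EReal) := (hzfg q hq).le
  have hlimsup : limsup u atTop ≤ v := by
    by_contra hlt
    push_neg at hlt
    obtain ⟨q, hq1, hq2⟩ := EReal.lt_iff_exists_rat_btwn.1 hlt
    have h2 : limsup u atTop ≤ ((q : ℝ) : EReal) :=
      limsup_le_of_le (by isBoundedDefault) (Eventually.of_forall (hupper q hq1))
    exact absurd (lt_of_lt_of_le hq2 h2) (lt_irrefl _)
  -- cluster point analysis
  have hclust : ∀ m : ℕ → ℕ, StrictMono m → ∀ x₀ : EuclideanSpace ℝ (Fin d),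
      Tendsto (fun k => x (m k) ω) atTop (𝓝 x₀) →
      (x₀ ∈ C ∧ ∀ᵐ ξ ∂ℙ, φ ξ x₀ ≤ 0) ∧ v ≤ g x₀ := by
    intro m hm x₀ htend
    have hx₀C : x₀ ∈ C :=
      hC_closed.mem_of_tendsto htend (Eventually.of_forall fun k => (hmin (m k)).1.1)
    have hfeas_all : ∀ i, φ (ω i) x₀ ≤ 0 := by
      intro i
      by_contra hcon
      rw [not_le] at hcon
      have h2 := htend.eventually ((hφ_lsc (ω i)) x₀ 0 hcon)
      have h3 : ∀ᶠ k in atTop, i < m k := by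
        filter_upwards [eventually_gt_atTop i] with k hk
        exact lt_of_lt_of_le hk hm.le_apply
      obtain ⟨k, hk2, hk3⟩ := (h2.and h3).exists
      exact absurd ((hmin (m k)).1.2 i (Finset.mem_range.2 hk3)) (not_le.2 hk2)
    have hx₀ae : ∀ᵐ ξ ∂ℙ, φ ξ x₀ ≤ 0 := hkey x₀ hfeas_all
    exact ⟨⟨hx₀C, hx₀ae⟩, iInf₂_le x₀ ⟨hx₀C, hx₀ae⟩⟩
  -- lower bound
  have hlower : ∀ b : ℝ, (b : EReal) < v → ∀ᶠ n in atTop, (b : EReal) ≤ u n := by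
    intro b hb
    by_contra hno
    rw [Filter.not_eventually] at hno
    have hno' : ∃ᶠ n in atTop, u n < (b : EReal) := hno.mono fun n h => not_le.1 h
    obtain ⟨m1, hm1, hm1lt⟩ := Filter.extraction_of_frequently_atTop hno'
    obtain ⟨x₀, _, ψ, hψ, htend⟩ :=
      hCcpt.tendsto_subseq (x := fun k => x (m1 k) ω) (fun k => (hmin (m1 k)).1.1)
    have hmmono : StrictMono (m1 ∘ ψ) := hm1.comp hψ
    have htend' : Tendsto (fun k => x ((m1 ∘ ψ) k) ω) atTop (𝓝 x₀) := htend
    obtain ⟨-, hvle⟩ := hclust (m1 ∘ ψ) hmmono x₀ htend'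
    obtain ⟨r, hr⟩ := hquad x₀
    have hev := moreau_lower hg_lsc (hlam_pos 0) hr (fun k => hlam_pos ((m1 ∘ ψ) k))
      (hlam_to0.comp hmmono.tendsto_atTop) htend' (hb.trans_le hvle)
    obtain ⟨k, hk⟩ := hev.exists
    exact absurd (hm1lt (ψ k)) (not_lt.2 hk)
  have hliminf : v ≤ liminf u atTop := by
    by_contra h
    push_neg at h
    obtain ⟨q, hq1, hq2⟩ := EReal.lt_iff_exists_rat_btwn.1 h
    have h2 : ((q : ℝ) : EReal) ≤ liminf u atTop :=
      Filter.le_liminf_of_le (by isBoundedDefault) (hlower q hq2)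
    exact absurd (lt_of_lt_of_le hq1 h2) (lt_irrefl _)
  have hliminf_eq : liminf u atTop = v :=
    le_antisymm ((liminf_le_limsup).trans hlimsup) hliminf
  have hlimsup_eq : limsup u atTop = v :=
    le_antisymm hlimsup (hliminf.trans (liminf_le_limsup))
  refine ⟨tendsto_of_liminf_eq_limsup hliminf_eq hlimsup_eq, ?_⟩
  intro x₀ hcp
  obtain ⟨ψ, hψ, htend⟩ := TopologicalSpace.FirstCountableTopology.tendsto_subseq hcp
  have htend' : Tendsto (fun k => x (ψ k) ω) atTop (𝓝 x₀) := htend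
  obtain ⟨hmem, hvle⟩ := hclust ψ hψ x₀ htend'
  refine ⟨hmem, fun y hy => ?_⟩
  have hvy : v ≤ g y := iInf₂_le y hy
  have hx₀v : g x₀ ≤ v := by
    by_contra hcon
    rw [not_le] at hcon
    obtain ⟨q1, hq1a, hq1b⟩ := EReal.lt_iff_exists_rat_btwn.1 hcon
    obtain ⟨q2, hq2a, hq2b⟩ := EReal.lt_iff_exists_rat_btwn.1 hq1b
    obtain ⟨r, hr⟩ := hquad x₀
    have hev := moreau_lower hg_lsc (hlam_pos 0) hr (fun k => hlam_pos (ψ k))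
      (hlam_to0.comp hψ.tendsto_atTop) htend' hq2b
    obtain ⟨k, hk⟩ := hev.exists
    have h5 : u (ψ k) ≤ ((q1 : ℝ) : EReal) := hupper q1 hq1a (ψ k)
    exact absurd (hk.trans h5) (not_le.2 hq2a)
  exact hx₀v.trans hvy
end
end

section
/- Let S be a topological space, X a metric space, and M : S ⇉ X an outer-semicontinuous set-valued map. Let 𝒜 be a σ-algebra on S containing all open subsets of S, and let μ : 𝒜 → [0, ∞) be a finite, strictly positive measure (μ(U) > 0 for every nonempty open U ⊆ S). Then the set of points feasible μ-almost everywhere equals the set of points feasible everywhere: {x ∈ X : x ∈ M(s) for μ-a.e. s ∈ S} = ⋂_{s ∈ S} M(s). -/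
open Filter Topology MeasureTheory Set

noncomputable section

/-- for an outer-semicontinuous multifunction `M` (closed graph) and a
finite strictly positive measure `μ` on a σ-algebra containing the open sets, the set of
points feasible `μ`-a.e. equals the set of points feasible everywhere. -/
theorem ae_feasible_eq_iInter {S : Type*} [TopologicalSpace S] [MeasurableSpace S]
    {X : Type*} [MetricSpace X]
    (M : S → Set X) (hM_osc : IsClosed {p : S × X | p.2 ∈ M p.1})
    (hopen_meas : ∀ U : Set S, IsOpen U → MeasurableSet U)
    (μ : Measure S) [IsFiniteMeasure μ]
    (hμ_pos : ∀ U : Set S, IsOpen U → U.Nonempty → 0 < μ U) :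
    {x : X | ∀ᵐ s ∂μ, x ∈ M s} = ⋂ s, M s := by
  ext x
  simp only [Set.mem_setOf_eq, Set.mem_iInter]
  constructor
  · intro hae s₀
    by_contra hx
    have hclosed : IsClosed {s : S | x ∈ M s} :=
      hM_osc.preimage (Continuous.prodMk_left x : Continuous fun s : S => (s, x))
    have hUopen : IsOpen {s : S | x ∉ M s} := hclosed.isOpen_compl
    have hpos := hμ_pos _ hUopen ⟨s₀, hx⟩
    have : μ {s : S | x ∉ M s} = 0 := by
      have := hae
      rw [MeasureTheory.ae_iff] at this
      simpa using this
    simp [this] at hpos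
  · intro h
    exact Filter.Eventually.of_forall fun s => h s
end
end

section
/- Let X be a Polish space, S a topological space, 𝒜 a σ-algebra on S containing all open subsets of S, and μ : 𝒜 → [0, ∞) a finite, strictly positive measure such that the measure space (S, 𝒜, μ) is complete. Let M : S ⇉ X be an outer-semicontinuous set-valued map with closed values that is also measurable, let T : S → S be an ergodic measure-preserving transformation with respect to the normalized measure ℙ := μ/μ(S), let g : X → ℝ ∪ {+∞} be lower semicontinuous, and let g_n : X → ℝ ∪ {+∞} be lower semicontinuous functions converging continuously to g. Set I_n(s) := ⋂_{k=1}^n M(T^k(s)) and M_a := ⋂_{s ∈ S} M(s). Assume the infinite programming problem min{g(x) : x ∈ M_a} is feasible (there exists x ∈ M_a with g(x) < +∞) and that, for μ-a.e. s, the sequence g_n is eventually level-compact on I_n(s). Then for μ-a.e. s ∈ S, lim_n v(g_n, I_n(s)) = v(g, M_a). -/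
open Filter Topology MeasureTheory Set

noncomputable section

lemma ergodic_visits {S : Type*} [MeasurableSpace S] {P : Measure S}
    [IsFiniteMeasure P] {T : S → S} (hT : Ergodic T P) {E : Set S}
    (hE : MeasurableSet E) (hpos : P E ≠ 0) :
    ∀ᵐ s ∂P, ∃ k, 1 ≤ k ∧ T^[k] s ∈ E := by
  have hTmeas : Measurable T := hT.toMeasurePreserving.measurable
  set B : Set S := ⋃ k : ℕ, T^[k+1] ⁻¹' E with hB
  have hBmeas : MeasurableSet B :=
    MeasurableSet.iUnion fun k => (hTmeas.iterate (k+1)) hE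
  have hsub : T ⁻¹' B ⊆ B := by
    rw [hB, preimage_iUnion]
    refine iUnion_subset fun k => ?_
    have h1 : T ⁻¹' (T^[k+1] ⁻¹' E) = T^[k+2] ⁻¹' E := by
      rw [← Set.preimage_comp, ← Function.iterate_succ]
    rw [h1]
    exact subset_iUnion (fun k : ℕ => T^[k+1] ⁻¹' E) (k+1)
  rcases hT.ae_empty_or_univ_of_preimage_ae_le hBmeas.nullMeasurableSet
      hsub.eventuallyLE with h | h
  · exfalso
    have h1 : P B = 0 := by
      rw [measure_congr h, measure_empty]
    have h2 : P (T^[1] ⁻¹' E) = P E :=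
      (hT.toMeasurePreserving.iterate 1).measure_preimage hE.nullMeasurableSet
    have h3 : P (T^[1] ⁻¹' E) ≤ P B :=
      measure_mono (subset_iUnion (fun k : ℕ => T^[k+1] ⁻¹' E) 0)
    exact hpos (le_antisymm (h2 ▸ h1 ▸ h3) (zero_le))
  · have h4 : P Bᶜ = 0 := ae_eq_univ.mp h
    rw [ae_iff]
    have h5 : {s | ¬ ∃ k, 1 ≤ k ∧ T^[k] s ∈ E} ⊆ Bᶜ := by
      intro s hs hsB
      rcases mem_iUnion.mp hsB with ⟨k, hk⟩
      exact hs ⟨k + 1, Nat.succ_le_succ (Nat.zero_le _), hk⟩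
    exact le_antisymm (h4 ▸ measure_mono h5) (zero_le)

/-- ergodic approach to infinite programming. With `μ` a finite strictly
positive complete measure on `S`, `M` outer-semicontinuous, closed-valued and measurable,
`T` ergodic measure-preserving with respect to `ℙ := μ/μ(S)`, the infinite program
feasible and `g n` eventually level-compact on `I n s` for a.e. `s`, the values converge:
`v(g n, I n s) → v(g, M_a)` for `μ`-a.e. `s`. -/
theorem infinite_programming_value_convergence {X : Type*} [MetricSpace X] [PolishSpace X]
    {S : Type*} [TopologicalSpace S] [MeasurableSpace S]
    (hopen_meas : ∀ U : Set S, IsOpen U → MeasurableSet U)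
    (μ : Measure S) [IsFiniteMeasure μ] [μ.IsComplete]
    (hμ_pos : ∀ U : Set S, IsOpen U → U.Nonempty → 0 < μ U)
    (M : S → Set X) (hM_osc : IsClosed {p : S × X | p.2 ∈ M p.1})
    (hM_closed : ∀ s, IsClosed (M s)) (hM_meas : MeasurableMultifun M)
    (T : S → S) (hT : Ergodic T ((μ Set.univ)⁻¹ • μ))
    (g : X → EReal) (gn : ℕ → X → EReal)
    (hg_noBot : ∀ x, g x ≠ ⊥) (hgn_noBot : ∀ n x, gn n x ≠ ⊥)
    (hg_lsc : LowerSemicontinuous g) (hgn_lsc : ∀ n, LowerSemicontinuous (gn n))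
    (hcc : ContConv gn g)
    (hfeas : ∃ x ∈ ⋂ s, M s, g x < ⊤)
    (hlc : ∀ᵐ s ∂μ, EvLevelCompact gn (fun n => ⋂ k ∈ Finset.Icc 1 n, M (T^[k] s))) :
    ∀ᵐ s ∂μ,
      Tendsto (fun n => vOn (gn n) (⋂ k ∈ Finset.Icc 1 n, M (T^[k] s))) atTop
        (𝓝 (vOn g (⋂ s, M s))) := by
  classical
  rcases eq_or_ne μ 0 with hμ0 | hμ0
  · simp [hμ0]
  obtain ⟨x₀, hx₀mem, hx₀lt⟩ := hfeas
  haveI : Nonempty X := ⟨x₀⟩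
  set P : Measure S := (μ Set.univ)⁻¹ • μ with hPdef
  have hSuniv : μ Set.univ ≠ 0 := fun h => hμ0 (Measure.measure_univ_eq_zero.mp h)
  have hc0 : (μ Set.univ)⁻¹ ≠ 0 := ENNReal.inv_ne_zero.mpr (measure_ne_top μ _)
  have haeP : ae P = ae μ := Measure.ae_ennreal_smul_measure_eq hc0 μ
  haveI : IsProbabilityMeasure P := by
    constructor
    rw [hPdef, Measure.smul_apply, smul_eq_mul,
      ENNReal.inv_mul_cancel hSuniv (measure_ne_top μ _)]
  have hPpos : ∀ A : Set S, μ A ≠ 0 → P A ≠ 0 := by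
    intro A hA
    rw [hPdef, Measure.smul_apply, smul_eq_mul]
    exact mul_ne_zero hc0 hA
  -- dense sequence
  set d : ℕ → X := TopologicalSpace.denseSeq X with hd
  have hdense : DenseRange d := TopologicalSpace.denseRange_denseSeq X
  -- the countable family of "bad" sets
  set E : ℕ → ℚ → Set S :=
    fun i r => {s | ¬ (M s ∩ Metric.ball (d i) (r : ℝ)).Nonempty} with hE
  have hEmeas : ∀ i r, MeasurableSet (E i r) := by
    intro i r
    exact (hM_meas (Metric.ball (d i) (r : ℝ)) Metric.isOpen_ball).compl
  have hgood : ∀ᵐ s ∂μ, ∀ i : ℕ, ∀ r : ℚ,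
      P (E i r) ≠ 0 → ∃ k, 1 ≤ k ∧ T^[k] s ∈ E i r := by
    rw [← haeP, ae_all_iff]
    intro i
    rw [ae_all_iff]
    intro r
    by_cases h : P (E i r) = 0
    · exact Eventually.of_forall fun s hs => absurd h hs
    · filter_upwards [ergodic_visits hT (hEmeas i r) h] with s hk _
      exact hk
  -- key inclusion : a.e. s, the orbit intersection is contained in M_a
  have hkey : ∀ᵐ s ∂μ, ∀ x : X,
      (∀ k, 1 ≤ k → x ∈ M (T^[k] s)) → x ∈ ⋂ s', M s' := by
    filter_upwards [hgood] with s hs x hx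
    rw [Set.mem_iInter]
    intro s₀
    by_contra hxs₀
    -- the set of s' with x ∉ M s' is open and nonempty
    have hUclosed : IsClosed {s' : S | x ∈ M s'} := by
      have hcont : Continuous (fun s' : S => (s', x)) :=
        continuous_id.prodMk continuous_const
      exact hM_osc.preimage hcont
    have hUopen : IsOpen {s' : S | x ∉ M s'} := by
      have := hUclosed.isOpen_compl
      convert this using 1
      rfl
    have hUpos : 0 < μ {s' : S | x ∉ M s'} := hμ_pos _ hUopen ⟨s₀, hxs₀⟩
    -- find a positive rational radius with positive measure of avoidance
    have hex : ∃ ρ : ℚ, 0 < (ρ : ℝ) ∧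
        μ {s' | ¬ (M s' ∩ Metric.ball x (ρ : ℝ)).Nonempty} ≠ 0 := by
      by_contra hcon
      push_neg at hcon
      have hcover : {s' : S | x ∉ M s'} ⊆
          ⋃ ρ : {q : ℚ // 0 < (q : ℝ)},
            {s' | ¬ (M s' ∩ Metric.ball x ((ρ : ℚ) : ℝ)).Nonempty} := by
        intro s' hs'
        have hoc : IsOpen (M s')ᶜ := (hM_closed s').isOpen_compl
        rcases Metric.isOpen_iff.mp hoc x hs' with ⟨ε, hε, hball⟩
        rcases exists_rat_btwn hε with ⟨ρ, hρ0, hρε⟩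
        refine mem_iUnion.mpr ⟨⟨ρ, by exact_mod_cast hρ0⟩, ?_⟩
        rintro ⟨y, hyM, hyb⟩
        exact hball (Metric.ball_subset_ball hρε.le hyb) hyM
      have hz : μ (⋃ ρ : {q : ℚ // 0 < (q : ℝ)},
          {s' | ¬ (M s' ∩ Metric.ball x ((ρ : ℚ) : ℝ)).Nonempty}) = 0 :=
        measure_iUnion_null fun ρ => by simpa [Set.not_nonempty_iff_eq_empty] using hcon ρ ρ.2
      exact absurd (le_antisymm (hz ▸ measure_mono hcover) (zero_le))
        (ne_of_gt hUpos)
    obtain ⟨ρ, hρ0, hρpos⟩ := hex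
    -- pick a dense point and a rational radius
    obtain ⟨i, hi⟩ := Metric.denseRange_iff.mp hdense x (ρ / 2) (by linarith)
    obtain ⟨r, hr1, hr2⟩ := exists_rat_btwn hi
    have hsubball : Metric.ball (d i) (r : ℝ) ⊆ Metric.ball x (ρ : ℝ) := by
      intro y hy
      rw [Metric.mem_ball] at hy ⊢
      have := dist_triangle y (d i) x
      rw [dist_comm x (d i)] at hi
      nlinarith [hi, hy]
    have hEsub : {s' | ¬ (M s' ∩ Metric.ball x (ρ : ℝ)).Nonempty} ⊆ E i r := by
      rintro s' hs' ⟨y, hyM, hyb⟩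
      exact hs' ⟨y, hyM, hsubball hyb⟩
    have hPE : P (E i r) ≠ 0 := by
      refine hPpos _ ?_
      intro h0
      exact hρpos (le_antisymm (h0 ▸ measure_mono hEsub) (zero_le))
    obtain ⟨k, hk1, hkE⟩ := hs i r hPE
    exact hkE ⟨x, hx k hk1, Metric.mem_ball.mpr hr1⟩
  -- main analysis
  filter_upwards [hkey, hlc] with s hks hlcs
  set I : ℕ → Set X := fun n => ⋂ k ∈ Finset.Icc 1 n, M (T^[k] s) with hI
  have hMaI : ∀ n, (⋂ s', M s') ⊆ I n := by
    intro n x hx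
    exact Set.mem_iInter₂.mpr fun k _ => Set.mem_iInter.mp hx _
  have hup : atTop.limsup (fun n => vOn (gn n) (I n)) ≤ vOn g (⋂ s', M s') := by
    rw [vOn]
    refine le_iInf₂ fun x hx => ?_
    have h1 : ∀ n, vOn (gn n) (I n) ≤ gn n x := fun n => iInf₂_le x (hMaI n hx)
    have h2 : Tendsto (fun n => gn n x) atTop (𝓝 (g x)) :=
      hcc x (fun _ => x) tendsto_const_nhds
    calc atTop.limsup (fun n => vOn (gn n) (I n))
        ≤ atTop.limsup (fun n => gn n x) := limsup_le_limsup (Eventually.of_forall h1)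
      _ = g x := h2.limsup_eq
  have hlo : vOn g (⋂ s', M s') ≤ atTop.liminf (fun n => vOn (gn n) (I n)) := by
    by_contra hcon
    rw [not_le] at hcon
    obtain ⟨α, hα1, hα2⟩ := EReal.exists_between_coe_real hcon
    have hfreq : ∃ᶠ n in atTop, vOn (gn n) (I n) < (α : EReal) :=
      frequently_lt_of_liminf_lt (h := hα1)
    have hfreq' : ∃ᶠ n in atTop, ∃ x, x ∈ I n ∧ gn n x < (α : EReal) := by
      refine hfreq.mono fun n hn => ?_
      by_contra h
      push_neg at h
      exact absurd hn (not_lt.mpr (le_iInf₂ fun x hx => h x hx))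
    obtain ⟨φ, hφ, hφP⟩ := Filter.extraction_of_frequently_atTop hfreq'
    choose xs hxsI hxslt using hφP
    obtain ⟨N, hN⟩ := hlcs α
    have hmemQ : ∀ j, xs (j + N) ∈
        closure (⋃ n ∈ Ici N, {x ∈ I n | gn n x ≤ (α : EReal)}) := by
      intro j
      refine subset_closure (Set.mem_biUnion ?_ ⟨hxsI (j + N), (hxslt (j + N)).le⟩)
      exact le_trans (Nat.le_add_left N j) (hφ.le_apply)
    obtain ⟨xb, hxbQ, ψ, hψ, hψt⟩ := hN.tendsto_subseq hmemQ
    set σ : ℕ → ℕ := fun j => φ (ψ j + N) with hσdef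
    have hσmono : StrictMono σ := fun a b hab => hφ (by
      have := hψ hab
      omega)
    set y : ℕ → X := fun j => xs (ψ j + N) with hy
    have hyt : Tendsto y atTop (𝓝 xb) := hψt
    have hyI : ∀ j, y j ∈ I (σ j) := fun j => hxsI _
    have hylt : ∀ j, gn (σ j) (y j) < (α : EReal) := fun j => hxslt _
    have hσge : ∀ j, j ≤ σ j := by
      intro j
      calc j ≤ ψ j := hψ.le_apply
        _ ≤ ψ j + N := Nat.le_add_right _ _
        _ ≤ φ (ψ j + N) := hφ.le_apply
    -- the limit point is in every M (T^[k] s), k ≥ 1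
    have hxbM : ∀ k, 1 ≤ k → xb ∈ M (T^[k] s) := by
      intro k hk
      refine (hM_closed _).mem_of_tendsto hyt ?_
      filter_upwards [eventually_ge_atTop k] with j hj
      have hkσ : k ≤ σ j := le_trans hj (hσge j)
      exact Set.mem_iInter₂.mp (hyI j) k (Finset.mem_Icc.mpr ⟨hk, hkσ⟩)
    have hxbMa : xb ∈ ⋂ s', M s' := hks xb hxbM
    -- g xb ≤ α via continuous convergence
    set u : ℕ → X := fun n => if h : ∃ j, σ j = n then y h.choose else xb with hu
    have huσ : ∀ j, u (σ j) = y j := by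
      intro j
      have hex : ∃ j', σ j' = σ j := ⟨j, rfl⟩
      rw [hu]
      simp only [dif_pos hex]
      congr 1
      exact hσmono.injective hex.choose_spec
    have hut : Tendsto u atTop (𝓝 xb) := by
      rw [Metric.tendsto_atTop]
      intro ε hε
      rcases (Metric.tendsto_atTop.mp hyt) ε hε with ⟨J, hJ⟩
      refine ⟨σ J, fun n hn => ?_⟩
      rw [hu]
      by_cases hex : ∃ j, σ j = n
      · simp only [dif_pos hex]
        have hjJ : J ≤ hex.choose := by
          have := hex.choose_spec
          by_contra hc
          push_neg at hc
          have := hσmono hc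
          omega
        exact hJ _ hjJ
      · simp only [dif_neg hex]
        simpa using hε
    have h3 : Tendsto (fun j => gn (σ j) (y j)) atTop (𝓝 (g xb)) := by
      have h4 := (hcc xb u hut).comp hσmono.tendsto_atTop
      refine h4.congr fun j => ?_
      simp only [Function.comp_apply, huσ]
    have hgxb : g xb ≤ (α : EReal) :=
      le_of_tendsto h3 (Eventually.of_forall fun j => (hylt j).le)
    have : vOn g (⋂ s', M s') ≤ (α : EReal) := le_trans (iInf₂_le xb hxbMa) hgxb
    exact absurd (lt_of_le_of_lt this hα2) (lt_irrefl _)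
  exact tendsto_of_le_liminf_of_limsup_le hlo hup
end
end

section
/- Let X be a Polish space, S a topological space, 𝒜 a σ-algebra on S containing all open subsets of S, and μ : 𝒜 → [0, ∞) a finite, strictly positive measure such that the measure space (S, 𝒜, μ) is complete. Let M : S ⇉ X be an outer-semicontinuous set-valued map with closed values that is also measurable, let T : S → S be an ergodic measure-preserving transformation with respect to the normalized measure ℙ := μ/μ(S), let g : X → ℝ ∪ {+∞} be lower semicontinuous, and let g_n : X → ℝ ∪ {+∞} be lower semicontinuous functions converging continuously to g. Set I_n(s) := ⋂_{k=1}^n M(T^k(s)) and M_a := ⋂_{s ∈ S} M(s). Assume the infinite programming problem min{g(x) : x ∈ M_a} is feasible (there exists x ∈ M_a with g(x) < +∞) and that, for μ-a.e. s, the sequence g_n is eventually level-compact on I_n(s). Then for any measurable functions ε_n : S → (0, +∞) with ε_n(s) → 0 for μ-a.e. s, one has, for μ-a.e. s ∈ S: ∅ ≠ limsup_n (ε_n(s)-argmin_{I_n(s)} g_n) ⊆ argmin_{M_a} g, where limsup_n denotes the Painlevé–Kuratowski outer limit of sets. -/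
open Filter Topology MeasureTheory Set

noncomputable section

theorem aux_recurrence {S : Type*} [MeasurableSpace S] (P : Measure S) (T : S → S)
    (hT : Ergodic T P) (hfin : P Set.univ ≠ ⊤) (A : Set S) (hA : MeasurableSet A)
    (hpos : P A ≠ 0) : ∀ᵐ s ∂P, ∃ k, 1 ≤ k ∧ T^[k] s ∈ A := by
  have hTm : Measurable T := hT.toMeasurePreserving.measurable
  set R : Set S := ⋃ k : ℕ, (T^[k+1]) ⁻¹' A with hR
  have hRm : MeasurableSet R := MeasurableSet.iUnion fun k => (hTm.iterate (k+1)) hA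
  have hsub : T ⁻¹' R ⊆ R := by
    intro s hs
    simp only [hR, Set.mem_preimage, Set.mem_iUnion] at hs ⊢
    obtain ⟨k, hk⟩ := hs
    refine ⟨k+1, ?_⟩
    simp only [Function.iterate_succ_apply] at hk ⊢
    exact hk
  have hmeq : P (T ⁻¹' R) = P R := hT.toMeasurePreserving.measure_preimage hRm.nullMeasurableSet
  have haeeq : T ⁻¹' R =ᵐ[P] R :=
    ae_eq_of_subset_of_measure_ge hsub hmeq.ge (hTm hRm).nullMeasurableSet
      (lt_of_le_of_lt (measure_mono (Set.subset_univ _)) hfin.lt_top).ne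
  rcases hT.quasiErgodic.ae_empty_or_univ₀ hRm.nullMeasurableSet haeeq with h | h
  · exfalso
    have h0 : P R = 0 := by simpa using measure_congr h
    have hle : P ((T^[1]) ⁻¹' A) ≤ P R :=
      measure_mono (Set.subset_iUnion (fun k => (T^[k+1]) ⁻¹' A) 0)
    rw [h0, nonpos_iff_eq_zero, Function.iterate_one] at hle
    exact hpos (by rwa [hT.toMeasurePreserving.measure_preimage hA.nullMeasurableSet] at hle)
  · have hmem : ∀ᵐ s ∂P, s ∈ R := by
      have h0 := ae_eq_univ.mp h
      rw [ae_iff]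
      simpa [Set.compl_def] using h0
    filter_upwards [hmem] with s hs
    simp only [hR, Set.mem_iUnion, Set.mem_preimage] at hs
    obtain ⟨k, hk⟩ := hs
    exact ⟨k+1, Nat.le_add_left 1 k, hk⟩

open Classical in
theorem aux_fill {X : Type*} [MetricSpace X] {gn : ℕ → X → EReal} {g : X → EReal}
    (hcc : ContConv gn g) {φ : ℕ → ℕ} (hφ : StrictMono φ) {x : ℕ → X} {xs : X}
    (hx : Tendsto x atTop (𝓝 xs)) :
    Tendsto (fun k => gn (φ k) (x k)) atTop (𝓝 (g xs)) := by
  set u : ℕ → X := fun n => if h : ∃ k, φ k = n then x h.choose else xs with hu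
  have huφ : ∀ k, u (φ k) = x k := by
    intro k
    have h : ∃ k', φ k' = φ k := ⟨k, rfl⟩
    simp only [hu, dif_pos h]
    congr 1
    exact hφ.injective h.choose_spec
  have hut : Tendsto u atTop (𝓝 xs) := by
    intro U hU
    rw [Filter.mem_map]
    have := hx hU
    rw [Filter.mem_map, mem_atTop_sets] at this
    obtain ⟨K, hK⟩ := this
    rw [mem_atTop_sets]
    refine ⟨φ K, fun n hn => ?_⟩
    by_cases h : ∃ k, φ k = n
    · have hc := h.choose_spec
      have : K ≤ h.choose := by
        by_contra hlt
        push_neg at hlt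
        have h2 : φ h.choose < φ K := hφ hlt
        rw [hc] at h2
        exact absurd hn (not_le_of_gt h2)
      have := hK h.choose this
      simpa [hu, dif_pos h] using this
    · simpa [hu, dif_neg h] using mem_of_mem_nhds hU
  have := (hcc xs u hut).comp hφ.tendsto_atTop
  refine this.congr fun k => ?_
  simp [Function.comp, huφ k]

theorem aux_cluster {X : Type*} [MetricSpace X] {In : ℕ → Set X}
    (hIc : ∀ n, IsClosed (In n)) (hmono : Antitone In) {gn : ℕ → X → EReal} {g : X → EReal}
    (hcc : ContConv gn g) {φ : ℕ → ℕ} (hφ : StrictMono φ) {x : ℕ → X} {xs : X}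
    (hx : Tendsto x atTop (𝓝 xs)) (hmem : ∀ k, x k ∈ In (φ k)) :
    xs ∈ (⋂ n, In n) ∧ Tendsto (fun k => gn (φ k) (x k)) atTop (𝓝 (g xs)) := by
  constructor
  · rw [Set.mem_iInter]
    intro m
    refine (hIc m).mem_of_tendsto hx ?_
    filter_upwards [eventually_ge_atTop m] with k hk
    exact hmono (le_trans hk hφ.le_apply) (hmem k)
  · exact aux_fill hcc hφ hx

theorem vOn_lt {X : Type*} {h : X → EReal} {C : Set X} {a : EReal} (hlt : vOn h C < a) :
    ∃ x ∈ C, h x < a := by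
  by_contra hcon
  push_neg at hcon
  exact absurd (le_iInf₂ hcon) (not_le_of_gt hlt)

set_option maxHeartbeats 1000000 in
theorem aux_det {X : Type*} [MetricSpace X] (In : ℕ → Set X) (hIc : ∀ n, IsClosed (In n))
    (hmono : Antitone In) (g : X → EReal) (gn : ℕ → X → EReal)
    (hg_noBot : ∀ x, g x ≠ ⊥) (hcc : ContConv gn g)
    (hlc : EvLevelCompact gn In) (xbar : X) (hxbar : xbar ∈ ⋂ n, In n) (hfeas : g xbar < ⊤)
    (ε : ℕ → ℝ) (hεpos : ∀ n, 0 < ε n) (hε0 : Tendsto ε atTop (𝓝 0)) :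
    (outerLim (fun n => argminOn (gn n) (In n) (ε n))).Nonempty ∧
      outerLim (fun n => argminOn (gn n) (In n) (ε n)) ⊆ argminOn g (⋂ n, In n) 0 := by
  set Ma : Set X := ⋂ n, In n with hMa
  set v : EReal := vOn g Ma with hv
  set vn : ℕ → EReal := fun n => vOn (gn n) (In n) with hvn
  set A : ℕ → Set X := fun n => argminOn (gn n) (In n) (ε n) with hA
  have hMaIn : ∀ n, Ma ⊆ In n := fun n => Set.iInter_subset In n
  -- limsup vn ≤ v
  have hlimsup : atTop.limsup vn ≤ v := by
    refine le_iInf₂ fun x hx => ?_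
    have h1 : ∀ n, vn n ≤ gn n x := fun n => iInf₂_le x (hMaIn n hx)
    have h2 : Tendsto (fun n => gn n x) atTop (𝓝 (g x)) :=
      hcc x (fun _ => x) tendsto_const_nhds
    calc atTop.limsup vn ≤ atTop.limsup (fun n => gn n x) :=
          limsup_le_limsup (Eventually.of_forall h1)
      _ = g x := h2.limsup_eq
  -- selection lemma
  have hsel : ∀ β : ℝ, (∃ᶠ n in atTop, vn n < (β : EReal)) →
      ∃ xs ∈ Ma, g xs ≤ (β : EReal) := by
    intro β hfreq
    obtain ⟨N, hN⟩ := hlc β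
    have hfreq2 : ∀ j : ℕ, ∃ᶠ n in atTop, (N ≤ n ∧ vn n < (β : EReal)) := fun j =>
      ((eventually_ge_atTop N).and_frequently hfreq)
    obtain ⟨φ, hφ, hP⟩ := extraction_forall_of_frequently hfreq2
    choose x hxIn hxlt using fun k => vOn_lt (hP k).2
    have hxK : ∀ k, x k ∈ closure (⋃ n ∈ Ici N, {y ∈ In n | gn n y ≤ (β : EReal)}) := by
      intro k
      refine subset_closure ?_
      exact Set.mem_biUnion (hP k).1 ⟨hxIn k, (hxlt k).le⟩
    obtain ⟨xs, _, ψ, hψ, hxt⟩ := hN.tendsto_subseq hxK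
    have hcl := aux_cluster hIc hmono hcc (hφ.comp hψ) hxt (fun j => hxIn (ψ j))
    refine ⟨xs, hcl.1, ?_⟩
    exact le_of_tendsto hcl.2 (Eventually.of_forall fun j => (hxlt (ψ j)).le)
  -- v ≤ g xbar, hence v ≠ ⊤
  have hvle : v ≤ g xbar := iInf₂_le xbar hxbar
  have hvtop : v ≠ ⊤ := (lt_of_le_of_lt hvle hfeas).ne
  -- v ≠ ⊥
  have hvbot : v ≠ ⊥ := by
    intro hvb
    have hvnbot : Tendsto vn atTop (𝓝 ⊥) := by
      refine tendsto_of_liminf_eq_limsup ?_ ?_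
      · exact le_bot_iff.mp ((liminf_le_limsup).trans (hvb ▸ hlimsup))
      · exact le_bot_iff.mp (hvb ▸ hlimsup)
    obtain ⟨N, hN⟩ := hlc 0
    have hfr : ∀ j : ℕ, ∃ᶠ n in atTop, (N ≤ n ∧ vn n < ((-(j : ℝ) : ℝ) : EReal)) := by
      intro j
      refine Eventually.frequently ?_
      filter_upwards [eventually_ge_atTop N,
        EReal.tendsto_nhds_bot_iff_real.mp hvnbot (-(j:ℝ))] with n h1 h2
      exact ⟨h1, h2⟩
    obtain ⟨φ, hφ, hP⟩ := extraction_forall_of_frequently hfr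
    choose x hxIn hxlt using fun k => vOn_lt (hP k).2
    have hxK : ∀ k, x k ∈ closure (⋃ n ∈ Ici N, {y ∈ In n | gn n y ≤ ((0:ℝ) : EReal)}) := by
      intro k
      refine subset_closure (Set.mem_biUnion (hP k).1 ⟨hxIn k, le_trans (hxlt k).le ?_⟩)
      exact EReal.coe_le_coe_iff.2 (neg_nonpos.mpr (Nat.cast_nonneg k))
    obtain ⟨xs, _, ψ, hψ, hxt⟩ := hN.tendsto_subseq hxK
    have hcl := aux_cluster hIc hmono hcc (hφ.comp hψ) hxt (fun j => hxIn (ψ j))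
    have hle : ∀ r : ℕ, g xs ≤ ((-(r:ℝ) : ℝ) : EReal) := by
      intro r
      refine le_of_tendsto hcl.2 ?_
      filter_upwards [eventually_ge_atTop r] with j hj
      refine le_trans (hxlt (ψ j)).le ?_
      have : (r : ℝ) ≤ ((ψ j : ℕ) : ℝ) := by exact_mod_cast hj.trans hψ.le_apply
      exact EReal.coe_le_coe_iff.2 (by linarith)
    rcases eq_or_lt_of_le (bot_le : (⊥ : EReal) ≤ g xs) with hb | hb
    · exact hg_noBot xs hb.symm
    · obtain ⟨y, _, hy2⟩ := EReal.exists_between_coe_real hb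
      obtain ⟨r, hr⟩ := exists_nat_gt (-y)
      have := hle r
      have h2 : ((-(r:ℝ) : ℝ) : EReal) < (y : EReal) := by
        exact EReal.coe_lt_coe_iff.2 (by linarith)
      exact absurd (this.trans_lt (h2.trans hy2)) (lt_irrefl _)
  -- liminf vn ≥ v
  have hliminf : v ≤ atTop.liminf vn := by
    by_contra hcon
    push_neg at hcon
    obtain ⟨β, hβ1, hβ2⟩ := EReal.exists_between_coe_real hcon
    obtain ⟨xs, hxs, hgxs⟩ := hsel β (frequently_lt_of_liminf_lt (h := hβ1))
    have h1 : v ≤ (β : EReal) := le_trans (iInf₂_le xs hxs) hgxs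
    exact absurd hβ2 (not_lt_of_ge h1)
  have hvt : Tendsto vn atTop (𝓝 v) := tendsto_of_le_liminf_of_limsup_le hliminf hlimsup
  set vr : ℝ := v.toReal with hvr
  have hvrv : (vr : EReal) = v := EReal.coe_toReal hvtop hvbot
  -- eventual bundle
  have hEv : ∀ᶠ n in atTop, ((vr - 1 : ℝ) : EReal) < vn n ∧ vn n < ((vr + 1 : ℝ) : EReal)
      ∧ ε n < 1 := by
    have e1 : ((vr - 1 : ℝ) : EReal) < v := by
      rw [← hvrv]; exact EReal.coe_lt_coe_iff.2 (by linarith)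
    have e2 : v < ((vr + 1 : ℝ) : EReal) := by
      rw [← hvrv]; exact EReal.coe_lt_coe_iff.2 (by linarith)
    filter_upwards [hvt.eventually_const_lt e1, hvt.eventually_lt_const e2,
      hε0.eventually_lt_const one_pos] with n h1 h2 h3
    exact ⟨h1, h2, h3⟩
  -- for good n : A n nonempty and contained in sublevel (vr + 2)
  have hgood : ∀ n, (((vr - 1 : ℝ) : EReal) < vn n ∧ vn n < ((vr + 1 : ℝ) : EReal) ∧ ε n < 1) →
      (A n).Nonempty ∧ (A n) ⊆ {y ∈ In n | gn n y ≤ ((vr + 2 : ℝ) : EReal)}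
        ∧ vEpsOn (gn n) (In n) (ε n) = vn n + ((ε n : ℝ) : EReal) := by
    intro n ⟨h1, h2, h3⟩
    have hnb : vn n ≠ ⊥ := fun h => by simp [h] at h1
    have hnt : vn n ≠ ⊤ := fun h => by simp [h] at h2
    have hveps : vEpsOn (gn n) (In n) (ε n) = vn n + ((ε n : ℝ) : EReal) := by
      rw [vEpsOn, if_neg hnb]
    set t : ℝ := (vn n).toReal with ht
    have htv : (t : EReal) = vn n := EReal.coe_toReal hnt hnb
    have hlt : vn n < vEpsOn (gn n) (In n) (ε n) := by
      rw [hveps, ← htv, ← EReal.coe_add]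
      exact_mod_cast EReal.coe_lt_coe_iff.2 (by linarith [hεpos n])
    obtain ⟨x0, hx0In, hx0lt⟩ := vOn_lt hlt
    refine ⟨⟨x0, hx0In, hx0lt.le⟩, ?_, hveps⟩
    rintro y ⟨hyIn, hyle⟩
    refine ⟨hyIn, hyle.trans ?_⟩
    rw [hveps]
    calc vn n + ((ε n : ℝ) : EReal) ≤ ((vr + 1 : ℝ) : EReal) + ((1 : ℝ) : EReal) := by
          exact add_le_add h2.le (by exact_mod_cast EReal.coe_le_coe_iff.2 h3.le)
      _ = ((vr + 2 : ℝ) : EReal) := by norm_cast; ring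
  obtain ⟨N₁, hN₁⟩ := hlc (vr + 2)
  obtain ⟨n₀, hn₀⟩ := eventually_atTop.mp (hEv.and (eventually_ge_atTop N₁))
  set K : Set X := closure (⋃ n ∈ Ici N₁, {x ∈ In n | gn n x ≤ ((vr + 2 : ℝ) : EReal)}) with hK
  -- choose elements of A n in K
  have hAneK : ∀ k : ℕ, ∃ y, y ∈ A (k + n₀) ∧ y ∈ K := by
    intro k
    obtain ⟨hEvn, hN⟩ := hn₀ (k + n₀) (Nat.le_add_left _ _)
    obtain ⟨⟨y0, hy0⟩, hsub, -⟩ := hgood (k + n₀) hEvn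
    exact ⟨y0, hy0, subset_closure (Set.mem_biUnion hN (hsub hy0))⟩
  choose y hyA hyK using hAneK
  obtain ⟨xs, -, φ, hφ, hyt⟩ := hN₁.tendsto_subseq hyK
  have hidx : Tendsto (fun j => φ j + n₀) atTop atTop :=
    tendsto_atTop_mono (fun j => Nat.le_add_right (φ j) n₀) hφ.tendsto_atTop
  constructor
  · refine ⟨xs, ?_⟩
    show atTop.liminf (fun n => EMetric.infEdist xs (A n)) = 0
    refine le_antisymm ?_ zero_le
    refine ENNReal.le_of_forall_pos_le_add fun c hc _ => ?_
    rw [zero_add]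
    refine liminf_le_of_frequently_le' ?_
    refine hidx.frequently ?_
    refine Eventually.frequently ?_
    filter_upwards [EMetric.tendsto_nhds.mp hyt c (by exact_mod_cast hc)] with j hj
    refine le_trans (EMetric.infEdist_le_edist_of_mem (hyA (φ j))) ?_
    rw [edist_comm]
    exact hj.le
  · intro z hz
    have hz' : atTop.liminf (fun n => EMetric.infEdist z (A n)) = 0 := hz
    have hfr : ∀ j : ℕ, ∃ᶠ n in atTop,
        (n₀ ≤ n ∧ EMetric.infEdist z (A n) < ((j : ENNReal) + 1)⁻¹) := by
      intro j
      refine (eventually_ge_atTop n₀).and_frequently ?_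
      refine frequently_lt_of_liminf_lt (h := ?_)
      rw [hz']
      exact ENNReal.inv_pos.2 (by simp)
    obtain ⟨φ₂, hφ₂, hP⟩ := extraction_forall_of_frequently hfr
    have hex : ∀ j, ∃ w ∈ A (φ₂ j), edist z w < ((j : ENNReal) + 1)⁻¹ :=
      fun j => EMetric.infEdist_lt_iff.mp (hP j).2
    choose w hwA hwd using hex
    have hwt : Tendsto w atTop (𝓝 z) := by
      rw [EMetric.tendsto_nhds]
      intro c hc
      obtain ⟨m, hm⟩ := ENNReal.exists_inv_nat_lt hc.ne'
      filter_upwards [eventually_ge_atTop m] with j hj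
      rw [edist_comm]
      refine lt_of_lt_of_le (lt_of_lt_of_le (hwd j) ?_) hm.le
      exact ENNReal.inv_le_inv.mpr (by exact_mod_cast Nat.le_succ_of_le hj)
    have hcl := aux_cluster hIc hmono hcc hφ₂ hwt (fun j => (hwA j).1)
    have hveps : ∀ j, vEpsOn (gn (φ₂ j)) (In (φ₂ j)) (ε (φ₂ j))
        = vn (φ₂ j) + ((ε (φ₂ j) : ℝ) : EReal) := by
      intro j
      exact (hgood (φ₂ j) (hn₀ (φ₂ j) (hP j).1).1).2.2
    have htend : Tendsto (fun j => vn (φ₂ j) + ((ε (φ₂ j) : ℝ) : EReal)) atTop (𝓝 v) := by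
      have h1 : Tendsto (fun j => vn (φ₂ j)) atTop (𝓝 v) := hvt.comp hφ₂.tendsto_atTop
      have h2 : Tendsto (fun j => ((ε (φ₂ j) : ℝ) : EReal)) atTop (𝓝 ((0 : ℝ) : EReal)) :=
        EReal.tendsto_coe.2 (hε0.comp hφ₂.tendsto_atTop)
      have hadd := (EReal.continuousAt_add (p := (v, ((0 : ℝ) : EReal)))
        (Or.inr (by simp)) (Or.inr (by simp))).tendsto.comp (h1.prodMk_nhds h2)
      simpa [Function.comp_def] using hadd
    have hgz : g z ≤ v := by
      refine le_of_tendsto_of_tendsto' hcl.2 htend fun j => ?_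
      exact le_trans (hwA j).2 (hveps j).le
    refine ⟨hcl.1, ?_⟩
    have : vEpsOn g Ma 0 = v := by
      rw [vEpsOn, if_neg (by rw [← hv]; exact hvbot)]
      simp [← hv]
    show g z ≤ vEpsOn g Ma 0
    rw [this]
    exact hgz

set_option maxHeartbeats 1000000 in
/-- ergodic approach to infinite programming; argmin convergence. Under the
assumptions of the value-convergence result, for measurable `ε n > 0` with `ε n s → 0`
a.e., for `μ`-a.e. `s` the outer limit of the `ε n s`-argmins of `g n` on `I n s` is
nonempty and contained in the argmin of `g` on `M_a`. -/
theorem infinite_programming_argmin_convergence {X : Type*} [MetricSpace X] [PolishSpace X]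
    {S : Type*} [TopologicalSpace S] [MeasurableSpace S]
    (hopen_meas : ∀ U : Set S, IsOpen U → MeasurableSet U)
    (μ : Measure S) [IsFiniteMeasure μ] [μ.IsComplete]
    (hμ_pos : ∀ U : Set S, IsOpen U → U.Nonempty → 0 < μ U)
    (M : S → Set X) (hM_osc : IsClosed {p : S × X | p.2 ∈ M p.1})
    (hM_closed : ∀ s, IsClosed (M s)) (hM_meas : MeasurableMultifun M)
    (T : S → S) (hT : Ergodic T ((μ Set.univ)⁻¹ • μ))
    (g : X → EReal) (gn : ℕ → X → EReal)
    (hg_noBot : ∀ x, g x ≠ ⊥) (hgn_noBot : ∀ n x, gn n x ≠ ⊥)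
    (hg_lsc : LowerSemicontinuous g) (hgn_lsc : ∀ n, LowerSemicontinuous (gn n))
    (hcc : ContConv gn g)
    (hfeas : ∃ x ∈ ⋂ s, M s, g x < ⊤)
    (hlc : ∀ᵐ s ∂μ, EvLevelCompact gn (fun n => ⋂ k ∈ Finset.Icc 1 n, M (T^[k] s)))
    (εn : ℕ → S → ℝ) (hεn_meas : ∀ n, Measurable (εn n)) (hεn_pos : ∀ n s, 0 < εn n s)
    (hεn_to0 : ∀ᵐ s ∂μ, Tendsto (fun n => εn n s) atTop (𝓝 0)) :
    ∀ᵐ s ∂μ,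
      (outerLim (fun n =>
          argminOn (gn n) (⋂ k ∈ Finset.Icc 1 n, M (T^[k] s)) (εn n s))).Nonempty ∧
      outerLim (fun n =>
          argminOn (gn n) (⋂ k ∈ Finset.Icc 1 n, M (T^[k] s)) (εn n s)) ⊆
        argminOn g (⋂ s, M s) 0 := by
  rcases isEmpty_or_nonempty S with hS | hS
  · exact Eventually.of_forall fun s => (IsEmpty.false s).elim
  obtain ⟨xbar, hxbarM, hxbarT⟩ := hfeas
  haveI : Nonempty X := ⟨xbar⟩
  set e : ℕ → X := TopologicalSpace.denseSeq X with he
  have hdense : DenseRange e := TopologicalSpace.denseRange_denseSeq X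
  set O : ℕ → ℕ → Set S := fun j m =>
    interior {s' | ∀ y ∈ Metric.ball (e j) ((m : ℝ) + 1)⁻¹, y ∉ M s'} with hO
  have hμuniv0 : μ Set.univ ≠ 0 := (hμ_pos Set.univ isOpen_univ Set.univ_nonempty).ne'
  have hstepA : ∀ᵐ s ∂μ, ∀ j m : ℕ, (O j m).Nonempty → ∃ k, 1 ≤ k ∧ T^[k] s ∈ O j m := by
    rw [ae_all_iff]
    intro j
    rw [ae_all_iff]
    intro m
    by_cases hne : (O j m).Nonempty
    · have hOmeas : MeasurableSet (O j m) := hopen_meas _ isOpen_interior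
      have hc0 : (μ Set.univ)⁻¹ ≠ 0 := ENNReal.inv_ne_zero.2 (measure_ne_top μ _)
      have hP0 : ((μ Set.univ)⁻¹ • μ) (O j m) ≠ 0 := by
        simp only [Measure.smul_apply, smul_eq_mul]
        exact mul_ne_zero hc0 (hμ_pos _ isOpen_interior hne).ne'
      have hPfin : ((μ Set.univ)⁻¹ • μ) Set.univ ≠ ⊤ := by
        simp only [Measure.smul_apply, smul_eq_mul]
        exact ENNReal.mul_ne_top (ENNReal.inv_ne_top.2 hμuniv0) (measure_ne_top μ _)
      have hrec := aux_recurrence _ T hT hPfin (O j m) hOmeas hP0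
      have hrec' := (Measure.ae_ennreal_smul_measure_iff hc0).mp hrec
      filter_upwards [hrec'] with s hs _
      exact hs
    · exact Eventually.of_forall fun s h => absurd h hne
  filter_upwards [hstepA, hlc, hεn_to0] with s hAs hlcs hεs
  set In : ℕ → Set X := fun n => ⋂ k ∈ Finset.Icc 1 n, M (T^[k] s) with hIn
  have hIc : ∀ n, IsClosed (In n) := fun n => isClosed_biInter fun k _ => hM_closed _
  have hmono : Antitone In := by
    intro a b hab x hx
    simp only [hIn, Set.mem_iInter] at hx ⊢
    intro k hk
    rw [Finset.mem_Icc] at hk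
    exact hx k (Finset.mem_Icc.mpr ⟨hk.1, hk.2.trans hab⟩)
  have hMaeq : (⋂ n, In n) = ⋂ s', M s' := by
    apply Set.Subset.antisymm
    · intro x hx
      have hxk : ∀ k, 1 ≤ k → x ∈ M (T^[k] s) := by
        intro k hk
        have := Set.mem_iInter.mp hx k
        simp only [hIn, Set.mem_iInter] at this
        exact this k (Finset.mem_Icc.mpr ⟨hk, le_refl k⟩)
      rw [Set.mem_iInter]
      intro s'
      by_contra hxn
      have hopenC : IsOpen {p : S × X | p.2 ∈ M p.1}ᶜ := hM_osc.isOpen_compl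
      have hmemC : (s', x) ∈ {p : S × X | p.2 ∈ M p.1}ᶜ := hxn
      rcases isOpen_prod_iff.mp hopenC s' x hmemC with ⟨U, V, hU, hV, hsU, hxV, hUV⟩
      rcases Metric.isOpen_iff.mp hV x hxV with ⟨r, hr, hball⟩
      obtain ⟨m, hm⟩ := exists_nat_one_div_lt (by linarith : (0 : ℝ) < r / 2)
      have hδpos : (0 : ℝ) < ((m : ℝ) + 1)⁻¹ := by positivity
      have hδr : ((m : ℝ) + 1)⁻¹ < r / 2 := by
        rwa [one_div] at hm
      obtain ⟨j, hj⟩ := hdense.exists_dist_lt x hδpos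
      have hUsub : U ⊆ {s'' | ∀ y ∈ Metric.ball (e j) ((m : ℝ) + 1)⁻¹, y ∉ M s''} := by
        intro s'' hs'' y hy hyM
        have h1 : dist y x < r := by
          have h2 : dist y (e j) < ((m : ℝ) + 1)⁻¹ := Metric.mem_ball.mp hy
          have h3 : dist x (e j) < ((m : ℝ) + 1)⁻¹ := hj
          calc dist y x ≤ dist y (e j) + dist (e j) x := dist_triangle _ _ _
            _ = dist y (e j) + dist x (e j) := by rw [dist_comm (e j) x]
            _ < r := by linarith
        have : (s'', y) ∈ U ×ˢ V := ⟨hs'', hball (Metric.mem_ball.mpr h1)⟩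
        exact (hUV this) hyM
      have hO_ne : (O j m).Nonempty := ⟨s', interior_maximal hUsub hU hsU⟩
      obtain ⟨k, hk1, hkO⟩ := hAs j m hO_ne
      have hforb : ∀ y ∈ Metric.ball (e j) ((m : ℝ) + 1)⁻¹, y ∉ M (T^[k] s) :=
        interior_subset hkO
      exact hforb x (Metric.mem_ball.mpr hj) (hxk k hk1)
    · intro x hx
      rw [Set.mem_iInter]
      intro n
      simp only [hIn, Set.mem_iInter]
      intro k _
      exact Set.mem_iInter.mp hx (T^[k] s)
  have hxbarIn : xbar ∈ ⋂ n, In n := hMaeq.symm ▸ hxbarM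
  have hdet := aux_det In hIc hmono g gn hg_noBot hcc hlcs xbar hxbarIn hxbarT
    (fun n => εn n s) (fun n => hεn_pos n s) hεs
  rw [hMaeq] at hdet
  exact hdet
end
end

section
/- Let S be a topological space, 𝒜 a σ-algebra on S containing all open subsets of S, and μ : 𝒜 → [0, ∞) a finite, strictly positive measure such that (S, 𝒜, μ) is complete. Let g : ℝ^d → ℝ and φ : S × ℝ^d → ℝ be continuous functions, C ⊆ ℝ^d a bounded closed set, and T : S → S an ergodic measure-preserving transformation with respect to ℙ := μ/μ(S). Let (e_n) be a sequence of mollifiers on ℝ^d whose supports shrink to {0}, and let g_n(x) := ∫_{ℝ^d} e_n(x − z) g(z) dz be the mollifications of g. Consider the semi-infinite problem: minimize g(x) subject to x ∈ C and φ(s, x) ≤ 0 for all s ∈ S, and assume it is feasible (there exists x ∈ C with φ(s, x) ≤ 0 for all s ∈ S). For s ∈ S, let x_n(s) be a measurable selection of minimizers of the problem: minimize g_n(x) subject to x ∈ C and φ(T^i(s), x) ≤ 0 for i = 1, …, n. Then for μ-a.e. s ∈ S: (a) g_n(x_n(s)) converges to the optimal value of the semi-infinite problem, and (b) every cluster point of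 the sequence (x_n(s))_{n∈ℕ} is a minimizer of the semi-infinite problem. -/
open Filter Topology MeasureTheory Set

noncomputable section

private lemma ergodic_hits {S : Type*} [MeasurableSpace S] {T : S → S} {ν : MeasureTheory.Measure S}
    [MeasureTheory.IsProbabilityMeasure ν] (hT : Ergodic T ν) {U : Set S} (hU : MeasurableSet U)
    (hU0 : ν U ≠ 0) : ∀ᵐ s ∂ν, ∃ i, 1 ≤ i ∧ T^[i] s ∈ U := by
  set B : Set S := ⋃ i, T^[i+1] ⁻¹' U with hBdef
  have hBm : MeasurableSet B := MeasurableSet.iUnion fun i => (hT.measurable.iterate (i+1)) hU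
  have hsub : T ⁻¹' B ⊆ B := by
    intro s hs
    simp only [hBdef, Set.mem_iUnion, Set.mem_preimage] at hs ⊢
    obtain ⟨i, hi⟩ := hs
    exact ⟨i + 1, by rwa [Function.iterate_succ_apply]⟩
  rcases hT.ae_empty_or_univ_of_preimage_ae_le' hBm.nullMeasurableSet
      (HasSubset.Subset.eventuallyLE hsub) (MeasureTheory.measure_ne_top ν B) with h | h
  · exfalso
    apply hU0
    have h0 : ν B = 0 := MeasureTheory.ae_eq_empty.mp h
    have h1 : ν (T ⁻¹' U) = 0 := by
      refine MeasureTheory.measure_mono_null ?_ h0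
      intro s hs
      exact Set.mem_iUnion.mpr ⟨0, by simpa using hs⟩
    rwa [hT.measure_preimage hU.nullMeasurableSet] at h1
  · have h2 : ∀ᵐ s ∂ν, s ∈ B := Filter.eventuallyEq_univ.mp h
    filter_upwards [h2] with s hsB
    obtain ⟨i, hi⟩ := Set.mem_iUnion.mp hsB
    exact ⟨i + 1, by omega, hi⟩

private lemma molli_unif {d : ℕ} (g : EuclideanSpace ℝ (Fin d) → ℝ) (hg : Continuous g)
    (C : Set (EuclideanSpace ℝ (Fin d))) (hC : IsCompact C)
    (e : ℕ → EuclideanSpace ℝ (Fin d) → ℝ)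
    (he_meas : ∀ n, Measurable (e n)) (he_nonneg : ∀ n z, 0 ≤ e n z)
    (he_int : ∀ n, ∫ z, e n z = 1)
    (ρ : ℕ → ℝ) (hρ_to0 : Tendsto ρ atTop (𝓝 0))
    (he_supp : ∀ n, {z | 0 < e n z} ⊆ {z | ‖z‖ ≤ ρ n})
    {ε : ℝ} (hε : 0 < ε) :
    ∀ᶠ n in atTop, ∀ y ∈ C, |(∫ z, e n (y - z) * g z) - g y| ≤ ε := by
  set K := Metric.cthickening 1 C with hK
  have hKcpt : IsCompact K :=
    Metric.isCompact_of_isClosed_isBounded Metric.isClosed_cthickening hC.isBounded.cthickening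
  have hCK : C ⊆ K := Metric.self_subset_cthickening C
  obtain ⟨M, hM⟩ := hKcpt.exists_bound_of_continuousOn hg.continuousOn
  set M' := max M 0 with hM'
  obtain ⟨δ, hδ, hδε⟩ := Metric.uniformContinuousOn_iff.mp
    (hKcpt.uniformContinuousOn_of_continuous hg.continuousOn) ε hε
  have hev : ∀ᶠ n in atTop, ρ n < min δ 1 := hρ_to0.eventually_lt_const (lt_min hδ one_pos)
  filter_upwards [hev] with n hn y hyC
  have hIe : Integrable (e n) := by
    by_contra h
    have h1 := he_int n
    rw [MeasureTheory.integral_undef h] at h1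
    exact one_ne_zero h1.symm
  have hIshift : Integrable (fun z => e n (y - z)) := hIe.comp_sub_left y
  have hmeas_shift : Measurable fun z => e n (y - z) :=
    (he_meas n).comp (measurable_const.sub measurable_id)
  have hint_shift : (∫ z, e n (y - z)) = 1 := by
    rw [MeasureTheory.integral_sub_left_eq_self (e n) _ y]; exact he_int n
  have hzK : ∀ z, 0 < e n (y - z) → z ∈ K ∧ |g z - g y| < ε := by
    intro z hz
    have hnorm : ‖y - z‖ ≤ ρ n := he_supp n hz
    have hd : dist z y ≤ ρ n := by rw [dist_eq_norm, norm_sub_rev]; exact hnorm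
    have hzK' : z ∈ K :=
      Metric.mem_cthickening_of_dist_le z y 1 C hyC
        (hd.trans (hn.le.trans (min_le_right δ 1)))
    have hdist : dist z y < δ := lt_of_le_of_lt hd (lt_of_lt_of_le hn (min_le_left _ _))
    have h3 := hδε z hzK' y (hCK hyC) hdist
    rw [Real.dist_eq] at h3
    exact ⟨hzK', h3⟩
  have hIprod : Integrable (fun z => e n (y - z) * g z) := by
    refine (hIshift.mul_const M').mono
      ((hmeas_shift.mul hg.measurable).aestronglyMeasurable) (Filter.Eventually.of_forall fun z => ?_)
    rcases lt_or_ge 0 (e n (y - z)) with h | h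
    · rw [norm_mul, norm_mul]
      refine mul_le_mul_of_nonneg_left ?_ (norm_nonneg _)
      calc ‖g z‖ ≤ M := hM z (hzK z h).1
        _ ≤ M' := le_max_left _ _
        _ ≤ ‖M'‖ := le_abs_self _
    · have he0 : e n (y - z) = 0 := le_antisymm h (he_nonneg n _)
      simp [he0]
  have hIconst : Integrable (fun z => e n (y - z) * g y) := hIshift.mul_const _
  have hconst : (∫ z, e n (y - z) * g y) = g y := by
    rw [MeasureTheory.integral_mul_const, hint_shift, one_mul]
  have hdiff : (∫ z, e n (y - z) * g z) - g y
      = ∫ z, (e n (y - z) * g z - e n (y - z) * g y) := by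
    rw [MeasureTheory.integral_sub hIprod hIconst, hconst]
  rw [hdiff, ← Real.norm_eq_abs]
  have hbound : ∀ z, ‖e n (y - z) * g z - e n (y - z) * g y‖ ≤ e n (y - z) * ε := by
    intro z
    rw [← mul_sub, Real.norm_eq_abs, abs_mul, abs_of_nonneg (he_nonneg n _)]
    rcases lt_or_ge 0 (e n (y - z)) with h | h
    · exact mul_le_mul_of_nonneg_left (le_of_lt (hzK z h).2) (he_nonneg n _)
    · have he0 : e n (y - z) = 0 := le_antisymm h (he_nonneg n _)
      simp [he0]
  calc ‖∫ z, (e n (y - z) * g z - e n (y - z) * g y)‖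
      ≤ ∫ z, e n (y - z) * ε :=
        MeasureTheory.norm_integral_le_of_norm_le (hIshift.mul_const ε)
          (Filter.Eventually.of_forall hbound)
    _ = ε := by rw [MeasureTheory.integral_mul_const, hint_shift, one_mul]

/-- mollified ergodic approach to semi-infinite programming. With `g, φ`
continuous, `C` bounded and closed, `T` ergodic measure-preserving w.r.t. `ℙ := μ/μ(S)`,
mollifications `g n x = ∫ e n (x - z) g z dz` whose kernels have supports shrinking to
`{0}`, and measurable selections `x n s` of minimizers of `g n` over
`{x ∈ C : φ (T^i s) x ≤ 0, i = 1, …, n}`, for `μ`-a.e. `s`: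
(a) `g n (x n s)` converges to the optimal value of the semi-infinite problem, and
(b) every cluster point of `(x n s)` is a minimizer of the semi-infinite problem. -/
theorem mollified_semiInfinite_consistency {d : ℕ}
    {S : Type*} [TopologicalSpace S] [MeasurableSpace S]
    (hopen_meas : ∀ U : Set S, IsOpen U → MeasurableSet U)
    (μ : Measure S) [IsFiniteMeasure μ] [μ.IsComplete]
    (hμ_pos : ∀ U : Set S, IsOpen U → U.Nonempty → 0 < μ U)
    (g : EuclideanSpace ℝ (Fin d) → ℝ) (hg : Continuous g)
    (φ : S → EuclideanSpace ℝ (Fin d) → ℝ)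
    (hφ : Continuous fun p : S × EuclideanSpace ℝ (Fin d) => φ p.1 p.2)
    (C : Set (EuclideanSpace ℝ (Fin d))) (hC_bdd : Bornology.IsBounded C)
    (hC_closed : IsClosed C)
    (T : S → S) (hT : Ergodic T ((μ Set.univ)⁻¹ • μ))
    (e : ℕ → EuclideanSpace ℝ (Fin d) → ℝ)
    (he_meas : ∀ n, Measurable (e n)) (he_nonneg : ∀ n z, 0 ≤ e n z)
    (he_int : ∀ n, ∫ z, e n z = 1)
    (he_antitone : ∀ n, {z | 0 < e (n + 1) z} ⊆ {z | 0 < e n z})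
    (ρ : ℕ → ℝ) (hρ_to0 : Tendsto ρ atTop (𝓝 0))
    (he_supp : ∀ n, {z | 0 < e n z} ⊆ {z | ‖z‖ ≤ ρ n})
    (hfeas : ∃ x ∈ C, ∀ s, φ s x ≤ 0)
    (x : ℕ → S → EuclideanSpace ℝ (Fin d)) (hx_meas : ∀ n, Measurable (x n))
    (hx_min : ∀ᵐ s ∂μ, ∀ n,
      x n s ∈ {z ∈ C | ∀ i ∈ Finset.Icc 1 n, φ (T^[i] s) z ≤ 0} ∧
      ∀ y ∈ {z ∈ C | ∀ i ∈ Finset.Icc 1 n, φ (T^[i] s) z ≤ 0},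
        (∫ z, e n (x n s - z) * g z) ≤ ∫ z, e n (y - z) * g z) :
    ∀ᵐ s ∂μ,
      Tendsto (fun n => ∫ z, e n (x n s - z) * g z) atTop
        (𝓝 (sInf (g '' {z ∈ C | ∀ s' : S, φ s' z ≤ 0}))) ∧
      ∀ x₀, MapClusterPt x₀ atTop (fun n => x n s) →
        x₀ ∈ {z ∈ C | ∀ s' : S, φ s' z ≤ 0} ∧
        ∀ y ∈ {z ∈ C | ∀ s' : S, φ s' z ≤ 0}, g x₀ ≤ g y := by
  classical
  rcases isEmpty_or_nonempty S with hS | hS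
  · exact MeasureTheory.ae_of_all _ fun s => isEmptyElim s
  obtain ⟨xstar, hxstarC, hxstar_feas⟩ := hfeas
  set F : Set (EuclideanSpace ℝ (Fin d)) := {z ∈ C | ∀ s' : S, φ s' z ≤ 0} with hFdef
  have hC_cpt : IsCompact C := Metric.isCompact_of_isClosed_isBounded hC_closed hC_bdd
  have hF_closed : IsClosed F := by
    have : F = C ∩ ⋂ s' : S, {z | φ s' z ≤ 0} := by
      ext z; simp [hFdef, Set.mem_iInter]
    rw [this]
    refine hC_closed.inter (isClosed_iInter fun s' => ?_)
    exact isClosed_le (hφ.comp (continuous_const.prodMk continuous_id)) continuous_const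
  have hF_cpt : IsCompact F := hC_cpt.of_isClosed_subset hF_closed (Set.sep_subset _ _)
  have hF_ne : F.Nonempty := ⟨xstar, hxstarC, hxstar_feas⟩
  obtain ⟨xbar, hxbarF, hxbar_min⟩ := hF_cpt.exists_isMinOn hF_ne hg.continuousOn
  have hv : sInf (g '' F) = g xbar := by
    refine IsLeast.csInf_eq ⟨Set.mem_image_of_mem g hxbarF, ?_⟩
    rintro b ⟨y, hy, rfl⟩
    exact hxbar_min hy
  -- cover of C \ F
  set G : Set (EuclideanSpace ℝ (Fin d)) := C \ F with hGdef
  have hcover : ∀ x' ∈ G, ∃ r : ℝ, 0 < r ∧ ∃ W : Set S, IsOpen W ∧ W.Nonempty ∧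
      ∀ s' ∈ W, ∀ y ∈ Metric.closedBall x' r, 0 < φ s' y := by
    intro x' hx'
    have hnot : ¬ (∀ s' : S, φ s' x' ≤ 0) := fun hall => hx'.2 ⟨hx'.1, hall⟩
    push_neg at hnot
    obtain ⟨s₀, hs₀⟩ := hnot
    have hcont : Continuous fun y => φ s₀ y := hφ.comp (continuous_const.prodMk continuous_id)
    have hmem : {y | 0 < φ s₀ y} ∈ 𝓝 x' := (isOpen_lt continuous_const hcont).mem_nhds hs₀
    obtain ⟨r, hr, hball⟩ := Metric.nhds_basis_closedBall.mem_iff.mp hmem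
    have hopen : IsOpen {p : S × EuclideanSpace ℝ (Fin d) | 0 < φ p.1 p.2} :=
      isOpen_lt continuous_const hφ
    obtain ⟨u, v, hu, _, hsu, hKv, huv⟩ := generalized_tube_lemma isCompact_singleton
      (isCompact_closedBall x' r) hopen (by
        rintro ⟨a, b⟩ ⟨ha, hb⟩
        simp only [Set.mem_singleton_iff] at ha
        subst ha
        exact hball hb)
    exact ⟨r, hr, u, hu, ⟨s₀, hsu rfl⟩,
      fun s' hs' y hy => huv (Set.mk_mem_prod hs' (hKv hy))⟩
  choose r hr W hWopen hWne hWprop using hcover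
  obtain ⟨Tc, hTc_count, hTc_eq⟩ := TopologicalSpace.isOpen_iUnion_countable
    (fun p : G => Metric.ball (p : EuclideanSpace ℝ (Fin d)) (r p p.2))
    (fun p => Metric.isOpen_ball)
  have hGsub : G ⊆ ⋃ p ∈ Tc, Metric.ball (p : EuclideanSpace ℝ (Fin d)) (r p p.2) := by
    rw [hTc_eq]
    intro z hz
    exact Set.mem_iUnion.mpr ⟨⟨z, hz⟩, Metric.mem_ball_self (hr z hz)⟩
  -- the normalized measure
  have hμuniv0 : μ Set.univ ≠ 0 := (hμ_pos _ isOpen_univ Set.univ_nonempty).ne'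
  have hμunivtop : μ Set.univ ≠ ⊤ := MeasureTheory.measure_ne_top μ _
  have hcinv : (μ Set.univ)⁻¹ ≠ 0 := ENNReal.inv_ne_zero.mpr hμunivtop
  haveI hP : MeasureTheory.IsProbabilityMeasure ((μ Set.univ)⁻¹ • μ) := by
    constructor
    rw [MeasureTheory.Measure.smul_apply, smul_eq_mul, ENNReal.inv_mul_cancel hμuniv0 hμunivtop]
  have hhit : ∀ᵐ s ∂μ, ∀ p ∈ Tc, ∃ i, 1 ≤ i ∧ T^[i] s ∈ W p p.2 := by
    rw [← MeasureTheory.Measure.ae_ennreal_smul_measure_iff hcinv (μ := μ)]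
    rw [MeasureTheory.ae_ball_iff hTc_count]
    intro p hp
    refine ergodic_hits hT (hopen_meas _ (hWopen p p.2)) ?_
    rw [MeasureTheory.Measure.smul_apply, smul_eq_mul]
    exact mul_ne_zero hcinv (hμ_pos _ (hWopen p p.2) (hWne p p.2)).ne'
  filter_upwards [hx_min, hhit] with s hs hhits
  have hcluster : ∀ x₀, MapClusterPt x₀ atTop (fun n => x n s) → x₀ ∈ F := by
    intro x₀ hx₀
    have hx₀C : x₀ ∈ C := by
      rw [← hC_closed.closure_eq, mem_closure_iff_nhds]
      intro t ht
      obtain ⟨n, hn⟩ := (mapClusterPt_iff_frequently.mp hx₀ t ht).exists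
      exact ⟨x n s, hn, (hs n).1.1⟩
    by_contra hx₀F
    obtain ⟨p, hpT, hpball⟩ := Set.mem_iUnion₂.mp (hGsub ⟨hx₀C, hx₀F⟩)
    obtain ⟨i, hi1, hiW⟩ := hhits p hpT
    have hball_nhds : Metric.ball (p : EuclideanSpace ℝ (Fin d)) (r p p.2) ∈ 𝓝 x₀ :=
      Metric.isOpen_ball.mem_nhds hpball
    obtain ⟨n, hnball, hni⟩ :=
      ((mapClusterPt_iff_frequently.mp hx₀ _ hball_nhds).and_eventually (Filter.eventually_ge_atTop i)).exists
    have hcon := (hs n).1.2 i (Finset.mem_Icc.mpr ⟨hi1, hni⟩)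
    have hpos := hWprop p p.2 _ hiW (x n s) (Metric.ball_subset_closedBall hnball)
    linarith
  have hlow : ∀ ε : ℝ, 0 < ε → ∀ᶠ n in atTop, g xbar - ε < g (x n s) := by
    intro ε hε
    by_contra hcon
    rw [Filter.not_eventually] at hcon
    obtain ⟨ψ, hψmono, hψ⟩ := Filter.extraction_of_frequently_atTop hcon
    obtain ⟨x₀, hx₀C, ψ₂, hψ₂mono, hψ₂tend⟩ :=
      hC_cpt.tendsto_subseq (x := fun k => x (ψ k) s) (fun k => (hs (ψ k)).1.1)
    have htend2 : Tendsto ((fun n => x n s) ∘ (ψ ∘ ψ₂)) atTop (𝓝 x₀) := hψ₂tend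
    have hclus : MapClusterPt x₀ atTop (fun n => x n s) :=
      MapClusterPt.of_comp ((hψmono.comp hψ₂mono).tendsto_atTop) htend2.mapClusterPt
    have hx₀F : x₀ ∈ F := hcluster x₀ hclus
    have hle : g x₀ ≤ g xbar - ε := by
      refine le_of_tendsto (hg.continuousAt.tendsto.comp hψ₂tend)
        (Filter.Eventually.of_forall fun k => ?_)
      exact not_lt.mp (hψ (ψ₂ k))
    have h5 : g xbar ≤ g x₀ := hxbar_min hx₀F
    linarith
  have hkey : ∀ ε : ℝ, 0 < ε → ∀ᶠ n in atTop,
      |(∫ z, e n (x n s - z) * g z) - g xbar| < ε ∧ |g (x n s) - g xbar| < ε := by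
    intro ε hε
    have h4 : (0:ℝ) < ε/4 := by linarith
    filter_upwards [molli_unif g hg C hC_cpt e he_meas he_nonneg he_int ρ hρ_to0 he_supp h4,
      hlow (ε/2) (by linarith)] with n hn hlo
    have hunC : x n s ∈ C := (hs n).1.1
    have h1 := abs_sub_le_iff.mp (hn _ hunC)
    have h2 := abs_sub_le_iff.mp (hn _ hxbarF.1)
    have h3 : (∫ z, e n (x n s - z) * g z) ≤ ∫ z, e n (xbar - z) * g z :=
      (hs n).2 xbar ⟨hxbarF.1, fun i _ => hxbarF.2 _⟩
    constructor
    · rw [abs_sub_lt_iff]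
      constructor <;> linarith [h1.1, h1.2, h2.1, h2.2]
    · rw [abs_sub_lt_iff]
      constructor <;> linarith [h1.1, h1.2, h2.1, h2.2]
  have hgoal1 : Tendsto (fun n => ∫ z, e n (x n s - z) * g z) atTop (𝓝 (g xbar)) := by
    rw [Metric.tendsto_atTop]
    intro ε hε
    obtain ⟨N, hN⟩ := Filter.eventually_atTop.mp (hkey ε hε)
    exact ⟨N, fun n hn => by rw [Real.dist_eq]; exact (hN n hn).1⟩
  have hgu : Tendsto (fun n => g (x n s)) atTop (𝓝 (g xbar)) := by
    rw [Metric.tendsto_atTop]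
    intro ε hε
    obtain ⟨N, hN⟩ := Filter.eventually_atTop.mp (hkey ε hε)
    exact ⟨N, fun n hn => by rw [Real.dist_eq]; exact (hN n hn).2⟩
  refine ⟨by rw [hv]; exact hgoal1, ?_⟩
  intro x₀ hx₀
  refine ⟨hcluster x₀ hx₀, ?_⟩
  obtain ⟨ψ, hψmono, hψtend⟩ := TopologicalSpace.FirstCountableTopology.tendsto_subseq hx₀
  have h1 : Tendsto (fun k => g (x (ψ k) s)) atTop (𝓝 (g x₀)) :=
    hg.continuousAt.tendsto.comp hψtend
  have h2 : Tendsto (fun k => g (x (ψ k) s)) atTop (𝓝 (g xbar)) :=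
    hgu.comp hψmono.tendsto_atTop
  have heq : g x₀ = g xbar := tendsto_nhds_unique h1 h2
  intro y hy
  rw [heq]
  exact hxbar_min hy
end
end
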